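/- arXiv:1504.06981 — 6 statements merged into one kernel-verified Lean document; each statement's English description precedes it below -/
import Mathlib

section
/- Let X be a Banach space which is the 1-unconditional sum of a family (X_λ)_{λ∈Λ} of closed subspaces, i.e.: X_λ ∩ X_μ = {0} for distinct λ, μ; ‖Σ_{λ∈F} x_λ‖ ≤ ‖Σ_{λ∈G} x_λ‖ whenever F ⊆ G are finite subsets of Λ and x_λ ∈ X_λ for λ ∈ G; and the linear span of ⋃_λ X_λ is dense in X. If each X_λ is weakly Lindelöf determined, then X is 1-Plichko; moreover D = {f ∈ X* : {λ ∈ Λ : f restricted to X_λ is not identically 0} is countable} is a 1-norming subspace of X* and there is a set S ⊆ X with dense linear span such that D = {f ∈ X* : {s ∈ S : f(s) ≠ 0} is countable}. -/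
set_option synthInstance.maxHeartbeats 1000000
set_option maxHeartbeats 1000000

theorem aux_norming_functional
    {𝕜 : Type*} [RCLike 𝕜] {X : Type*} [NormedAddCommGroup X] [NormedSpace 𝕜 X]
    {Λ : Type*} (Xl : Λ → Submodule 𝕜 X)
    (hmono : ∀ F G : Finset Λ, F ⊆ G → ∀ x : Λ → X, (∀ l ∈ G, x l ∈ Xl l) →
      ‖∑ l ∈ F, x l‖ ≤ ‖∑ l ∈ G, x l‖)
    (hdense : Dense (Submodule.span 𝕜 (⋃ l, (Xl l : Set X)) : Set X))
    (x : X) (ε : ℝ) (hε : 0 < ε) :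
    ∃ f : X →L[𝕜] 𝕜, ‖f‖ ≤ 1 ∧ {l : Λ | ¬ ∀ z ∈ Xl l, f z = 0}.Countable ∧
      ‖x‖ - ε ≤ ‖f x‖ := by
  classical
  by_cases hxε : ‖x‖ ≤ ε
  · refine ⟨0, by simp, by simp, by simpa using sub_nonpos.mpr hxε⟩
  push_neg at hxε
  set V : Submodule 𝕜 X := Submodule.span 𝕜 (⋃ l, (Xl l : Set X)) with hV
  have hVsup : V = iSup Xl := by
    rw [hV, Submodule.span_iUnion]
    simp [Submodule.span_eq]
  set T : (Π₀ l, Xl l) →ₗ[𝕜] X := DFinsupp.lsum ℕ (fun l => (Xl l).subtype) with hTdef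
  have hT : ∀ d : Π₀ l, Xl l, T d = ∑ l ∈ d.support, ((d l : X)) := by
    intro d
    simp [hTdef, DFinsupp.lsum_apply_apply, DFinsupp.sumAddHom_apply, DFinsupp.sum]
  have hcomp : ∀ (d : Π₀ l, Xl l) (l : Λ), ‖(d l : X)‖ ≤ ‖T d‖ := by
    intro d l
    by_cases h : l ∈ d.support
    · have := hmono {l} d.support (by simpa using h) (fun l => ((d l : X)))
        (fun l _ => (d l).2)
      simpa [hT d] using this
    · rw [DFinsupp.notMem_support_iff] at h
      simp [h, norm_nonneg]
  have hinj : Function.Injective T := by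
    rw [injective_iff_map_eq_zero]
    intro d hd
    ext l
    have h2 := hcomp d l
    rw [hd, norm_zero] at h2
    have : (d l : X) = 0 := norm_le_zero_iff.mp h2
    simpa using this
  have hrange : LinearMap.range T = V := by
    rw [hVsup, Submodule.iSup_eq_range_dfinsupp_lsum]
  let e : (Π₀ l, Xl l) ≃ₗ[𝕜] ↥V :=
    (LinearEquiv.ofInjective T hinj).trans (LinearEquiv.ofEq _ _ hrange)
  have he : ∀ dd : Π₀ l, Xl l, ((e dd : ↥V) : X) = T dd := by
    intro dd
    simp [e]
  have hesymm : ∀ v : ↥V, T (e.symm v) = (v : X) := by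
    intro v
    conv_rhs => rw [← e.apply_symm_apply v]
    rw [he]
  -- the key monotonicity bound for filtered sums
  have key : ∀ (d : Π₀ l, Xl l) (p : Λ → Prop) (_ : DecidablePred p),
      ‖T (d.filter p)‖ ≤ ‖T d‖ := by
    intro d p hp
    rw [hT, hT]
    rw [DFinsupp.support_filter]
    have hsum : ∑ l ∈ d.support.filter p, ((d.filter p) l : X)
        = ∑ l ∈ d.support.filter p, ((d l : X)) := by
      refine Finset.sum_congr rfl fun l hl => ?_
      rw [Finset.mem_filter] at hl
      simp [DFinsupp.filter_apply, hl.2]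
    rw [hsum]
    exact hmono _ _ (Finset.filter_subset _ _) (fun l => ((d l : X)))
      (fun l _ => (d l).2)
  -- choose an approximant y of x in V
  set δ := ε / 2 with hδ
  have hδpos : 0 < δ := by positivity
  obtain ⟨y, hyV, hxy⟩ : ∃ y ∈ (V : Set X), dist x y < δ := by
    have hx : x ∈ closure (V : Set X) := hdense x
    exact Metric.mem_closure_iff.mp hx δ hδpos
  obtain ⟨d, hd⟩ : ∃ d : Π₀ l, Xl l, T d = y := by
    have : y ∈ LinearMap.range T := hrange ▸ hyV
    exact this
  obtain ⟨g, hg1, hgy⟩ := exists_dual_vector'' 𝕜 y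
  set F : Finset Λ := d.support with hF
  -- the functional on V
  set φlin : ↥V →ₗ[𝕜] 𝕜 :=
    g.toLinearMap ∘ₗ T ∘ₗ (DFinsupp.filterLinearMap 𝕜 _ (· ∈ F)) ∘ₗ e.symm.toLinearMap
    with hφlin
  have hφapp : ∀ v : ↥V, φlin v = g (T ((e.symm v).filter (· ∈ F))) := fun v => rfl
  have hbound : ∀ v : ↥V, ‖φlin v‖ ≤ 1 * ‖v‖ := by
    intro v
    rw [hφapp, one_mul]
    calc ‖g (T ((e.symm v).filter (· ∈ F)))‖ ≤ ‖g‖ * ‖T ((e.symm v).filter (· ∈ F))‖ :=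
          g.le_opNorm _
      _ ≤ 1 * ‖T ((e.symm v).filter (· ∈ F))‖ := by
          exact mul_le_mul_of_nonneg_right hg1 (norm_nonneg _)
      _ = ‖T ((e.symm v).filter (· ∈ F))‖ := one_mul _
      _ ≤ ‖T (e.symm v)‖ := key _ _ _
      _ = ‖v‖ := by rw [hesymm]; rfl
  set φ : ↥V →L[𝕜] 𝕜 := LinearMap.mkContinuous φlin 1 hbound with hφ
  have hφnorm : ‖φ‖ ≤ 1 := LinearMap.mkContinuous_norm_le _ zero_le_one _
  have hφval : ∀ v : ↥V, φ v = φlin v := fun v => rfl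
  -- extend to X
  have hdr : DenseRange (V.subtypeL : ↥V →L[𝕜] X) := by
    have : Set.range (V.subtypeL : ↥V →L[𝕜] X) = (V : Set X) := Subtype.range_coe
    rw [DenseRange, this]
    exact hdense
  have hN : ∀ v : ↥V, ‖v‖ ≤ ((1 : NNReal) : ℝ) * ‖(V.subtypeL : ↥V →L[𝕜] X) v‖ := by
    intro v
    rw [NNReal.coe_one, one_mul]
    rfl
  set f : X →L[𝕜] 𝕜 := φ.extend V.subtypeL with hf
  have hfval : ∀ v : ↥V, f (v : X) = φ v := by
    intro v
    exact ContinuousLinearMap.extend_eq φ hdr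
      (ContinuousLinearMap.isUniformEmbedding_of_bound _ hN).isUniformInducing v
  have hfnorm : ‖f‖ ≤ 1 := by
    have := φ.opNorm_extend_le hdr (N := 1) hN
    calc ‖f‖ ≤ ((1 : NNReal) : ℝ) * ‖φ‖ := this
      _ ≤ 1 * 1 := by
          exact mul_le_mul_of_nonneg_left hφnorm (by norm_num)
      _ = 1 := one_mul 1
  have hmemV : ∀ {l : Λ} {z : X}, z ∈ Xl l → z ∈ V := by
    intro l z hz
    exact Submodule.subset_span (Set.mem_iUnion.mpr ⟨l, hz⟩)
  have hvanish : ∀ l, l ∉ F → ∀ z ∈ Xl l, f z = 0 := by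
    intro l hl z hz
    have hzV : z ∈ V := hmemV hz
    have h1 : f z = φ ⟨z, hzV⟩ := hfval ⟨z, hzV⟩
    rw [h1, hφval, hφapp]
    have hsingle : e.symm ⟨z, hzV⟩ = DFinsupp.single l ⟨z, hz⟩ := by
      apply hinj
      rw [hesymm]
      simp [hTdef]
    rw [hsingle]
    have : DFinsupp.filter (· ∈ F) (DFinsupp.single (β := fun l => ↥(Xl l)) l ⟨z, hz⟩) = 0 := by
      ext m
      by_cases hm : m = l
      · subst hm
        simp [DFinsupp.filter_apply, hl]
      · simp [DFinsupp.filter_apply, DFinsupp.single_apply, Ne.symm hm, hm]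
    rw [this]
    simp
  have hyval : f y = g y := by
    have h1 : f y = φ ⟨y, hyV⟩ := hfval ⟨y, hyV⟩
    rw [h1, hφval, hφapp]
    have hsymm : e.symm ⟨y, hyV⟩ = d := by
      apply hinj
      rw [hesymm, hd]
    rw [hsymm]
    have hfilt : d.filter (· ∈ F) = d := by
      ext l
      by_cases h : l ∈ F
      · simp [DFinsupp.filter_apply, h]
      · have h0 : d l = 0 := DFinsupp.notMem_support_iff.mp h
        simp [DFinsupp.filter_apply, h, h0]
    rw [hfilt, hd]
  have hfy : ‖f y‖ = ‖y‖ := by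
    rw [hyval, hgy]
    simp
  refine ⟨f, hfnorm, ?_, ?_⟩
  · refine Set.Countable.mono ?_ F.countable_toSet
    intro l hl
    by_contra hlF
    exact hl (hvanish l hlF)
  · have hxy' : ‖x - y‖ < δ := by rwa [dist_eq_norm] at hxy
    have hyx' : ‖y - x‖ < δ := by rwa [norm_sub_rev] at hxy'
    have h1 : ‖y‖ ≤ ‖f x‖ + δ := by
      have e1 : f y = f x + f (y - x) := by rw [map_sub]; ring
      have e2 : ‖f (y - x)‖ ≤ δ := by
        calc ‖f (y - x)‖ ≤ ‖f‖ * ‖y - x‖ := f.le_opNorm _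
          _ ≤ 1 * ‖y - x‖ := mul_le_mul_of_nonneg_right hfnorm (norm_nonneg _)
          _ ≤ δ := by rw [one_mul]; exact le_of_lt hyx'
      calc ‖y‖ = ‖f y‖ := hfy.symm
        _ = ‖f x + f (y - x)‖ := by rw [e1]
        _ ≤ ‖f x‖ + ‖f (y - x)‖ := norm_add_le _ _
        _ ≤ ‖f x‖ + δ := by linarith
    have h2 : ‖x‖ - δ ≤ ‖y‖ := by
      have : ‖x‖ ≤ ‖y‖ + ‖x - y‖ := norm_le_insert' x y
      linarith
    rw [hδ] at h1 h2
    linarith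

/-- **Proposition.** If a Banach space `X` is the 1-unconditional sum of a family
`(X_λ)_{λ ∈ Λ}` of closed subspaces each of which is weakly Lindelöf determined, then `X`
is 1-Plichko; moreover `D = {f ∈ X^* : {λ : f|_{X_λ} ≠ 0} is countable}` is a 1-norming
Σ-subspace of `X^*`. -/
theorem onePlichko_of_oneUnconditionalSum_of_wld
    {𝕜 : Type*} [RCLike 𝕜] {X : Type*} [NormedAddCommGroup X] [NormedSpace 𝕜 X]
    [CompleteSpace X] {Λ : Type*} (Xl : Λ → Submodule 𝕜 X)
    (hclosed : ∀ l, IsClosed (Xl l : Set X))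
    (hdisjoint : ∀ l m, l ≠ m → Xl l ⊓ Xl m = ⊥)
    (hmono : ∀ F G : Finset Λ, F ⊆ G → ∀ x : Λ → X, (∀ l ∈ G, x l ∈ Xl l) →
      ‖∑ l ∈ F, x l‖ ≤ ‖∑ l ∈ G, x l‖)
    (hdense : Dense (Submodule.span 𝕜 (⋃ l, (Xl l : Set X)) : Set X))
    (hwld : ∀ l, ∃ S : Set ↥(Xl l),
      Dense (Submodule.span 𝕜 S : Set ↥(Xl l)) ∧
      ∀ f : ↥(Xl l) →L[𝕜] 𝕜, {s ∈ S | f s ≠ 0}.Countable) :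
    ∃ (D : Submodule 𝕜 (X →L[𝕜] 𝕜)) (S : Set X),
      (D : Set (X →L[𝕜] 𝕜)) = {f | {l : Λ | ¬ ∀ x ∈ Xl l, f x = 0}.Countable} ∧
      Dense (Submodule.span 𝕜 S : Set X) ∧
      (D : Set (X →L[𝕜] 𝕜)) = {f | {s ∈ S | f s ≠ 0}.Countable} ∧
      ∀ x : X, ‖x‖ = sSup {r : ℝ | ∃ f ∈ D, ‖f‖ ≤ 1 ∧ r = ‖f x‖} := by
  classical
  choose Sl hSldense hSlcount using hwld
  set D : Submodule 𝕜 (X →L[𝕜] 𝕜) :=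
    { carrier := {f | {l : Λ | ¬ ∀ x ∈ Xl l, f x = 0}.Countable}
      add_mem' := by
        intro f g hf hg
        simp only [Set.mem_setOf_eq] at hf hg ⊢
        refine Set.Countable.mono ?_ (hf.union hg)
        intro l hl
        simp only [Set.mem_setOf_eq] at hl
        by_contra h
        simp only [Set.mem_union, Set.mem_setOf_eq, not_or, not_not] at h
        exact hl fun x hx => by
          simp [ContinuousLinearMap.add_apply, h.1 x hx, h.2 x hx]
      zero_mem' := by
        simp only [Set.mem_setOf_eq]
        convert Set.countable_empty
        ext l
        simp
      smul_mem' := by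
        intro c f hf
        simp only [Set.mem_setOf_eq] at hf ⊢
        refine Set.Countable.mono ?_ hf
        intro l hl
        simp only [Set.mem_setOf_eq] at hl ⊢
        by_contra h
        exact hl fun x hx => by
          simp [ContinuousLinearMap.smul_apply, h x hx] } with hD
  set S : Set X := ⋃ l, (Subtype.val '' (Sl l)) with hS
  have hSdense : Dense (Submodule.span 𝕜 S : Set X) := by
    have hle : Submodule.span 𝕜 (⋃ l, (Xl l : Set X)) ≤
        (Submodule.span 𝕜 S).topologicalClosure := by
      rw [Submodule.span_le]
      intro z hz
      rw [Set.mem_iUnion] at hz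
      obtain ⟨l, hzl⟩ := hz
      have h1 : (⟨z, hzl⟩ : ↥(Xl l)) ∈ closure (Submodule.span 𝕜 (Sl l) : Set ↥(Xl l)) :=
        hSldense l _
      have h2 : z ∈ closure (Subtype.val '' (Submodule.span 𝕜 (Sl l) : Set ↥(Xl l))) :=
        image_closure_subset_closure_image continuous_subtype_val
          (Set.mem_image_of_mem _ h1)
      have h3 : Subtype.val '' (Submodule.span 𝕜 (Sl l) : Set ↥(Xl l)) ⊆
          (Submodule.span 𝕜 S : Set X) := by
        rintro w ⟨w', hw', rfl⟩
        have hmap : (Xl l).subtype w' ∈ Submodule.map (Xl l).subtype (Submodule.span 𝕜 (Sl l)) :=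
          Submodule.mem_map_of_mem hw'
        rw [Submodule.map_span] at hmap
        refine Submodule.span_mono ?_ hmap
        intro u hu
        obtain ⟨u', hu', rfl⟩ := hu
        exact Set.mem_iUnion.mpr ⟨l, Set.mem_image_of_mem _ hu'⟩
      exact closure_mono h3 h2
    exact dense_closure.mp (hdense.mono hle)
  have hDS : (D : Set (X →L[𝕜] 𝕜)) = {f | {s ∈ S | f s ≠ 0}.Countable} := by
    ext f
    simp only [SetLike.mem_coe, Set.mem_setOf_eq]
    constructor
    · intro hf
      have hf' : {l : Λ | ¬ ∀ x ∈ Xl l, f x = 0}.Countable := hf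
      have hsub : {s ∈ S | f s ≠ 0} ⊆
          ⋃ l ∈ {l : Λ | ¬ ∀ x ∈ Xl l, f x = 0},
            Subtype.val '' {s ∈ Sl l | f.comp (Xl l).subtypeL s ≠ 0} := by
        rintro s ⟨hsS, hsf⟩
        rw [hS, Set.mem_iUnion] at hsS
        obtain ⟨l, hsl⟩ := hsS
        obtain ⟨s', hs', rfl⟩ := hsl
        refine Set.mem_biUnion (x := l) ?_ ?_
        · intro hall
          exact hsf (hall _ s'.2)
        · exact ⟨s', ⟨hs', by simpa using hsf⟩, rfl⟩
      refine Set.Countable.mono hsub ?_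
      exact hf'.biUnion fun l _ => ((hSlcount l _).image _)
    · intro hT
      set t : Λ → X := fun l =>
        if h : ∃ s : ↥(Xl l), s ∈ Sl l ∧ f ↑s ≠ 0 then ↑h.choose else 0 with ht
      have hex : ∀ l ∈ {l : Λ | ¬ ∀ x ∈ Xl l, f x = 0},
          ∃ s : ↥(Xl l), s ∈ Sl l ∧ f ↑s ≠ 0 := by
        intro l hl
        by_contra hno
        push_neg at hno
        apply hl
        intro z hz
        have hker : Submodule.span 𝕜 (Sl l) ≤ (f.comp (Xl l).subtypeL).ker := by
          rw [Submodule.span_le]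
          intro s hs
          simp only [SetLike.mem_coe, LinearMap.mem_ker]
          simpa using hno s hs
        have hcl : (⟨z, hz⟩ : ↥(Xl l)) ∈ closure (Submodule.span 𝕜 (Sl l) : Set ↥(Xl l)) :=
          hSldense l _
        have hclker : closure (Submodule.span 𝕜 (Sl l) : Set ↥(Xl l)) ⊆
            ((f.comp (Xl l).subtypeL).ker : Set ↥(Xl l)) := by
          refine closure_minimal hker ?_
          exact ContinuousLinearMap.isClosed_ker _
        have hz0 := hclker hcl
        simpa using hz0
      have hmapsto : Set.MapsTo t {l : Λ | ¬ ∀ x ∈ Xl l, f x = 0} {s ∈ S | f s ≠ 0} := by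
        intro l hl
        have h := hex l hl
        have htl : t l = ↑h.choose := by rw [ht]; simp only [dif_pos h]
        obtain ⟨hs1, hs2⟩ := h.choose_spec
        refine ⟨?_, ?_⟩
        · rw [htl, hS]
          exact Set.mem_iUnion.mpr ⟨l, Set.mem_image_of_mem _ hs1⟩
        · rw [htl]
          exact hs2
      have hinjon : Set.InjOn t {l : Λ | ¬ ∀ x ∈ Xl l, f x = 0} := by
        intro l hl m hm hlm
        by_contra hne
        have h1 := hex l hl
        have h2 := hex m hm
        have htl : t l = ↑h1.choose := by rw [ht]; simp only [dif_pos h1]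
        have htm : t m = ↑h2.choose := by rw [ht]; simp only [dif_pos h2]
        have htl1 : t l ∈ Xl l := by rw [htl]; exact h1.choose.2
        have htm1 : t m ∈ Xl m := by rw [htm]; exact h2.choose.2
        have htl0 : t l ≠ 0 := by
          intro h0
          apply h1.choose_spec.2
          rw [← htl, h0, map_zero]
        have hmem : t l ∈ Xl l ⊓ Xl m := ⟨htl1, hlm ▸ htm1⟩
        rw [hdisjoint l m hne] at hmem
        exact htl0 (Submodule.mem_bot 𝕜 |>.mp hmem)
      exact hmapsto.countable_of_injOn hinjon hT
  have hnorm : ∀ x : X, ‖x‖ = sSup {r : ℝ | ∃ f ∈ D, ‖f‖ ≤ 1 ∧ r = ‖f x‖} := by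
    intro x
    set R := {r : ℝ | ∃ f ∈ D, ‖f‖ ≤ 1 ∧ r = ‖f x‖} with hR
    have h0R : (0 : ℝ) ∈ R := ⟨0, D.zero_mem, by simp⟩
    have hub : ∀ r ∈ R, r ≤ ‖x‖ := by
      rintro r ⟨f, hfD, hf1, rfl⟩
      calc ‖f x‖ ≤ ‖f‖ * ‖x‖ := f.le_opNorm x
        _ ≤ 1 * ‖x‖ := mul_le_mul_of_nonneg_right hf1 (norm_nonneg x)
        _ = ‖x‖ := one_mul _
    have hbdd : BddAbove R := ⟨‖x‖, hub⟩
    refine le_antisymm ?_ (csSup_le ⟨0, h0R⟩ hub)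
    refine le_of_forall_pos_le_add ?_
    intro ε hε
    obtain ⟨f, hf1, hfc, hfx⟩ := aux_norming_functional Xl hmono hdense x ε hε
    have hfD : f ∈ D := hfc
    have hmem : ‖f x‖ ∈ R := ⟨f, hfD, hf1, rfl⟩
    have h := le_csSup hbdd hmem
    linarith
  exact ⟨D, S, rfl, hSdense, hDS, hnorm⟩
end

section
/- Let X be a Banach space and (Y_n)_{n∈ℕ} a sequence of closed linear subspaces of X such that each Y_n is weakly compactly generated and the linear span of ⋃_{n∈ℕ} Y_n is dense in X. Then X is weakly compactly generated. -/
set_option synthInstance.maxHeartbeats 1000000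
set_option maxHeartbeats 1000000

open NormedSpace Set Filter Topology Pointwise

private lemma toWeakSpaceCLM_image' {𝕜 : Type*} [RCLike 𝕜] {X : Type*} [NormedAddCommGroup X]
    [NormedSpace 𝕜 X] (s : Set X) : toWeakSpaceCLM 𝕜 X '' s = s :=
  Set.ext fun x => ⟨fun ⟨_, ha, h⟩ => h ▸ ha, fun h => ⟨x, h, rfl⟩⟩

/-- A weakly compact set in a normed space is norm-bounded. -/
private lemma bounded_of_weaklyCompact' {𝕜 : Type*} [RCLike 𝕜] {X : Type*} [NormedAddCommGroup X]
    [NormedSpace 𝕜 X] {A : Set X} (hA : IsCompact (toWeakSpaceCLM 𝕜 X '' A)) :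
    ∃ M : ℝ, 0 ≤ M ∧ ∀ x ∈ A, ‖x‖ ≤ M := by
  have hcomp : ∀ f : StrongDual 𝕜 X, ∃ C : ℝ,
      ∀ x : A, ‖(fun y : A => inclusionInDoubleDual 𝕜 X (y : X)) x f‖ ≤ C := by
    intro f
    have hc : Continuous fun x : WeakSpace 𝕜 X => (topDualPairing 𝕜 X).flip x f :=
      WeakBilin.eval_continuous _ f
    have himg : IsCompact ((fun x : WeakSpace 𝕜 X => (topDualPairing 𝕜 X).flip x f) ''
        (toWeakSpaceCLM 𝕜 X '' A)) := hA.image hc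
    obtain ⟨C, hC⟩ := isBounded_iff_forall_norm_le.1 himg.isBounded
    exact ⟨C, fun x => hC _ ⟨toWeakSpaceCLM 𝕜 X (x : X), ⟨(x : X), x.2, rfl⟩, rfl⟩⟩
  obtain ⟨C', hC'⟩ := banach_steinhaus hcomp
  refine ⟨max C' 0, le_max_right _ _, fun x hx => ?_⟩
  refine norm_le_dual_bound 𝕜 x (le_max_right _ _) fun f => ?_
  calc ‖f x‖ = ‖inclusionInDoubleDual 𝕜 X x f‖ := by rw [dual_def]
    _ ≤ ‖inclusionInDoubleDual 𝕜 X x‖ * ‖f‖ := ContinuousLinearMap.le_opNorm _ f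
    _ ≤ max C' 0 * ‖f‖ := by
        gcongr
        exact le_trans (hC' ⟨x, hx⟩) (le_max_left _ _)

/-- **Proposition.** If `X` is a Banach space and `(Y n)` is a sequence of closed subspaces,
each weakly compactly generated, whose union has dense linear span, then `X` is weakly
compactly generated. -/
theorem wcg_of_seq_of_wcg_subspaces
    {𝕜 : Type*} [RCLike 𝕜] {X : Type*} [NormedAddCommGroup X] [NormedSpace 𝕜 X]
    [CompleteSpace X] (Y : ℕ → Submodule 𝕜 X)
    (hclosed : ∀ n, IsClosed (Y n : Set X))
    (hwcg : ∀ n, ∃ K : Set ↥(Y n),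
      IsCompact (toWeakSpaceCLM 𝕜 ↥(Y n) '' K) ∧
      Dense (Submodule.span 𝕜 K : Set ↥(Y n)))
    (hdense : Dense (Submodule.span 𝕜 (⋃ n, (Y n : Set X)) : Set X)) :
    ∃ K : Set X, IsCompact (toWeakSpaceCLM 𝕜 X '' K) ∧
      Dense (Submodule.span 𝕜 K : Set X) := by
  haveI : ContinuousSMul 𝕜 (WeakSpace 𝕜 X) :=
    WeakBilin.instContinuousSMul ((topDualPairing 𝕜 X).flip)
  choose K hKcomp hKdense using hwcg
  set A : ℕ → Set X := fun n => Subtype.val '' K n with hAdef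
  -- each `A n` is weakly compact in `X`
  have hAcomp : ∀ n, IsCompact (toWeakSpaceCLM 𝕜 X '' A n) := by
    intro n
    rw [toWeakSpaceCLM_image']
    have h1 := (hKcomp n).image (WeakSpace.map ((Y n).subtypeL)).continuous
    rw [toWeakSpaceCLM_image'] at h1
    convert h1 using 1
    exact Iff.rfl
  -- norm bound on each `A n`
  choose M hM0 hM using fun n => bounded_of_weaklyCompact' (hAcomp n)
  set r : ℕ → ℝ := fun n => ((2 : ℝ) ^ n * (M n + 1))⁻¹ with hrdef
  have hrpos : ∀ n, 0 < r n := fun n =>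
    inv_pos.2 (mul_pos (by positivity) (by linarith [hM0 n]))
  set c : ℕ → 𝕜 := fun n => ((r n : ℝ) : 𝕜) with hcdef
  have hcne : ∀ n, c n ≠ 0 := fun n => by
    simp only [hcdef, ne_eq, RCLike.ofReal_eq_zero]
    exact (hrpos n).ne'
  set B : ℕ → Set X := fun n => c n • A n with hBdef
  set Kt : Set X := {0} ∪ ⋃ n, B n with hKtdef
  have hcnorm : ∀ n, ‖c n‖ = r n := by
    intro n
    simp only [hcdef, RCLike.norm_ofReal]
    exact abs_of_pos (hrpos n)
  -- norm bound on `B n`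
  have hBnorm : ∀ n, ∀ x ∈ B n, ‖x‖ ≤ ((2 : ℝ)⁻¹) ^ n := by
    intro n x hx
    rw [hBdef] at hx
    obtain ⟨a, ha, rfl⟩ := hx
    rw [norm_smul, hcnorm]
    have h1 : ‖a‖ ≤ M n + 1 := le_trans (hM n a ha) (by linarith)
    have h2 : r n * ‖a‖ ≤ r n * (M n + 1) :=
      mul_le_mul_of_nonneg_left h1 (hrpos n).le
    have h3 : r n * (M n + 1) = ((2 : ℝ)⁻¹) ^ n := by
      have hne : (M n + 1) ≠ 0 := by linarith [hM0 n]
      simp only [hrdef]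
      rw [mul_inv, mul_assoc, inv_mul_cancel₀ hne, mul_one, inv_pow]
    linarith [h2, h3.le, h3.ge]
  -- each `B n` is weakly compact
  have hBcomp : ∀ n, IsCompact (toWeakSpaceCLM 𝕜 X '' B n) := by
    intro n
    rw [toWeakSpaceCLM_image']
    have h1 : IsCompact (toWeakSpaceCLM 𝕜 X '' A n) := hAcomp n
    have h2 := h1.smul (c n)
    convert h2 using 1
    rw [toWeakSpaceCLM_image']
    exact Iff.rfl
  refine ⟨Kt, ?_, ?_⟩
  · -- weak compactness of Kt
    rw [toWeakSpaceCLM_image']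
    refine isCompact_iff_ultrafilter_le_nhds.2 ?_
    intro F hF
    replace hF := le_principal_iff.1 hF
    by_cases hex : ∃ n, B n ∈ F
    · obtain ⟨n, hn⟩ := hex
      have hn' : toWeakSpaceCLM 𝕜 X '' B n ∈ F := by
        rw [toWeakSpaceCLM_image']
        exact hn
      obtain ⟨x, hxB, hxF⟩ :=
        (isCompact_iff_ultrafilter_le_nhds.1 (hBcomp n)) F (le_principal_iff.2 hn')
      rw [toWeakSpaceCLM_image'] at hxB
      exact ⟨x, Or.inr (Set.mem_iUnion.2 ⟨n, hxB⟩), hxF⟩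
    · push_neg at hex
      refine ⟨0, Or.inl rfl, ?_⟩
      have hinj : Function.Injective (topDualPairing 𝕜 X).flip := by
        intro x y h
        refine eq_of_sub_eq_zero (eq_zero_of_forall_dual_eq_zero 𝕜 fun f => ?_)
        have hf : (topDualPairing 𝕜 X).flip x f = (topDualPairing 𝕜 X).flip y f := by rw [h]
        simpa [map_sub] using sub_eq_zero.2 hf
      have : Tendsto (fun x : WeakSpace 𝕜 X => x) F (𝓝 0) := by
        refine (WeakBilin.tendsto_iff_forall_eval_tendsto _ hinj).2 ?_
        intro f
        have h0 : (topDualPairing 𝕜 X).flip (0 : WeakSpace 𝕜 X) f = 0 := by exact map_zero f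
        rw [h0]
        rw [NormedAddCommGroup.tendsto_nhds_zero]
        intro ε hε
        have htend : Tendsto (fun n : ℕ => ‖f‖ * ((2 : ℝ)⁻¹) ^ n) atTop (𝓝 0) := by
          have := (tendsto_pow_atTop_nhds_zero_of_lt_one (by norm_num : (0:ℝ) ≤ 2⁻¹)
            (by norm_num : (2:ℝ)⁻¹ < 1)).const_mul ‖f‖
          simpa using this
        obtain ⟨N, hN⟩ := (htend.eventually (gt_mem_nhds hε)).exists
        have hEv : (Kt ∩ ⋂ n ∈ Finset.range N, (B n)ᶜ : Set (WeakSpace 𝕜 X)) ∈ F := by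
          refine Filter.inter_mem hF ?_
          refine (Filter.biInter_finset_mem _).2 fun n _ => ?_
          exact Ultrafilter.compl_mem_iff_notMem.2 (hex n)
        refine Filter.mem_of_superset hEv ?_
        rintro x ⟨hxK, hxn⟩
        rcases hxK with rfl | hxU
        · exact (show ‖f 0‖ < ε by simpa using hε)
        · obtain ⟨n, hxB⟩ := Set.mem_iUnion.1 hxU
          have hnN : N ≤ n := by
            by_contra hlt
            push_neg at hlt
            have := Set.mem_iInter₂.1 hxn n (Finset.mem_range.2 hlt)
            exact this hxB
          have hxnorm : ‖(toWeakSpace 𝕜 X).symm x‖ ≤ ((2 : ℝ)⁻¹) ^ n := hBnorm n _ hxB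
          show ‖(topDualPairing 𝕜 X).flip x f‖ < ε
          calc ‖(topDualPairing 𝕜 X).flip x f‖
              = ‖f ((toWeakSpace 𝕜 X).symm x)‖ := rfl
            _ ≤ ‖f‖ * ‖(toWeakSpace 𝕜 X).symm x‖ := f.le_opNorm _
            _ ≤ ‖f‖ * ((2 : ℝ)⁻¹) ^ n :=
                mul_le_mul_of_nonneg_left hxnorm (norm_nonneg f)
            _ ≤ ‖f‖ * ((2 : ℝ)⁻¹) ^ N :=
                mul_le_mul_of_nonneg_left
                  (pow_le_pow_of_le_one (by norm_num) (by norm_num) hnN) (norm_nonneg f)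
            _ < ε := hN
      exact this
  · -- density
    have hAsub : ∀ n, A n ⊆ (Submodule.span 𝕜 Kt : Set X) := by
      intro n a ha
      have hmem : c n • a ∈ B n := by
        rw [hBdef]
        exact Set.smul_mem_smul_set ha
      have h1 : c n • a ∈ Kt := Or.inr (Set.mem_iUnion.2 ⟨n, hmem⟩)
      have h2 : c n • a ∈ Submodule.span 𝕜 Kt := Submodule.subset_span h1
      have h3 := Submodule.smul_mem _ (c n)⁻¹ h2
      rwa [inv_smul_smul₀ (hcne n)] at h3
    have hspan : ∀ n, Y n ≤ (Submodule.span 𝕜 Kt).topologicalClosure := by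
      intro n x hx
      have hy : (⟨x, hx⟩ : Y n) ∈ closure (Submodule.span 𝕜 (K n) : Set (Y n)) :=
        (hKdense n) _
      have h1 : (x : X) ∈ closure (Subtype.val '' (Submodule.span 𝕜 (K n) : Set (Y n))) :=
        (image_closure_subset_closure_image continuous_subtype_val) ⟨_, hy, rfl⟩
      have h2 : Subtype.val '' (Submodule.span 𝕜 (K n) : Set (Y n)) ⊆
          (Submodule.span 𝕜 Kt : Set X) := by
        rintro z ⟨w, hw, rfl⟩
        have h3 : (w : X) ∈ Submodule.span 𝕜 (A n) := by
          have h4 : Submodule.map (Y n).subtype (Submodule.span 𝕜 (K n)) =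
              Submodule.span 𝕜 (A n) := by
            rw [Submodule.map_span]
            rfl
          rw [← h4]
          exact Submodule.mem_map_of_mem hw
        exact Submodule.span_le.2 (hAsub n) h3
      exact closure_mono h2 h1
    have hle : Submodule.span 𝕜 (⋃ n, (Y n : Set X)) ≤
        (Submodule.span 𝕜 Kt).topologicalClosure :=
      Submodule.span_le.2 (Set.iUnion_subset fun n => hspan n)
    have hd : Dense ((Submodule.span 𝕜 Kt).topologicalClosure : Set X) :=
      hdense.mono hle
    rwa [Submodule.topologicalClosure_coe, dense_closure] at hd
end

section
/- Let H be a complex Hilbert space, M ⊆ B(H) a von Neumann algebra, and p ∈ M a cyclic projection. Then the closed subspace L_p M_* = {φ ∈ M_* : φ(x) = φ(p x) for all x ∈ M} of the predual M_* is weakly compactly generated, and likewise R_p M_* = {φ ∈ M_* : φ(x) = φ(x p) for all x ∈ M} is weakly compactly generated. -/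
set_option synthInstance.maxHeartbeats 1000000
set_option maxHeartbeats 1000000

noncomputable section

namespace Paper

open scoped ComplexConjugate

variable {H : Type*} [NormedAddCommGroup H] [InnerProductSpace ℂ H] [CompleteSpace H]

variable (M : VonNeumannAlgebra H)

/-- The von Neumann algebra `M` regarded as a closed subspace of `B(H)`;
its subtype `↥(carrier M)` is the Banach space `M`. -/
def carrier : Submodule ℂ (H →L[ℂ] H) := M.toStarSubalgebra.toSubalgebra.toSubmodule

theorem mem_carrier {x : H →L[ℂ] H} : x ∈ carrier M ↔ x ∈ M := Iff.rfl

instance (priority := 10000) : NormedAddCommGroup ↥(carrier M) := inferInstance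
instance (priority := 10000) : NormedSpace ℂ ↥(carrier M) := inferInstance
instance (priority := 10000) : NormedAddCommGroup (↥(carrier M) →L[ℂ] ℂ) := inferInstance
instance (priority := 10000) : NormedSpace ℂ (↥(carrier M) →L[ℂ] ℂ) := inferInstance
instance (priority := 10000) : ContinuousAdd (↥(carrier M) →L[ℂ] ℂ) := by
  have h : IsTopologicalAddGroup (↥(carrier M) →L[ℂ] ℂ) := inferInstance
  exact h.toContinuousAdd

/-- The vector functional `ω_{ξ,η} : x ↦ ⟪x ξ, η⟫` (inner ℂ product linear in the first slot,
i.e. `⟪u, v⟫ = inner v u` in Mathlib's convention), as a continuous linear functional on `M`. -/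
def vecFunctional (ξ η : H) : ↥(carrier M) →L[ℂ] ℂ :=
  (innerSL ℂ η).comp ((ContinuousLinearMap.apply ℂ H ξ).comp (carrier M).subtypeL)

theorem vecFunctional_apply (ξ η : H) (x : ↥(carrier M)) :
    vecFunctional M ξ η x = inner ℂ η ((x : H →L[ℂ] H) ξ) := rfl

/-- The predual `M_*` of `M`: the norm-closed linear span, inside the dual of `M`,
of the vector functionals `ω_{ξ,η}`. -/
def predual : Submodule ℂ (↥(carrier M) →L[ℂ] ℂ) :=
  (Submodule.span ℂ {φ | ∃ ξ η : H, φ = vecFunctional M ξ η}).topologicalClosure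

theorem vecFunctional_mem_predual (ξ η : H) : vecFunctional M ξ η ∈ predual M :=
  Submodule.le_topologicalClosure _ (Submodule.subset_span ⟨ξ, η, rfl⟩)

instance (priority := 10000) : NormedAddCommGroup ↥(predual M) := inferInstance
instance (priority := 10000) : NormedSpace ℂ ↥(predual M) := inferInstance
instance (priority := 10000) : NormedSpace ℝ ↥(predual M) := inferInstance
instance (priority := 10000) : NormedAddCommGroup (↥(predual M) →L[ℂ] ℂ) := inferInstance
instance (priority := 10000) : NormedSpace ℂ (↥(predual M) →L[ℂ] ℂ) := inferInstance

/-- a projection belonging to `M` -/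
def IsProjectionIn (p : H →L[ℂ] H) : Prop := p ∈ M ∧ IsSelfAdjoint p ∧ p * p = p

/-- `M` is σ-finite: every family of pairwise orthogonal nonzero projections in `M`
is countable. -/
def SigmaFinite : Prop :=
  ∀ P : Set (H →L[ℂ] H),
    (∀ p ∈ P, IsProjectionIn M p ∧ p ≠ 0) →
    (∀ p ∈ P, ∀ q ∈ P, p ≠ q → p * q = 0) →
    P.Countable

/-- A projection `q ∈ M` is σ-finite if every family of pairwise orthogonal nonzero
projections `p ∈ M` with `p = q p q` is countable. -/
def IsSigmaFiniteProjection (q : H →L[ℂ] H) : Prop :=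
  IsProjectionIn M q ∧
    ∀ P : Set (H →L[ℂ] H),
      (∀ p ∈ P, IsProjectionIn M p ∧ p ≠ 0 ∧ p = q * p * q) →
      (∀ p ∈ P, ∀ r ∈ P, p ≠ r → p * r = 0) →
      P.Countable

/-- `ξ` is a generating vector for the projection `p ∈ M`:
the set `M'ξ = {a ξ : a ∈ M'}` is dense in `pH`, the range of `p`. -/
def IsGeneratingVector (p : H →L[ℂ] H) (ξ : H) : Prop :=
  closure {v : H | ∃ a ∈ M.commutant, v = a ξ} = Set.range p

/-- a cyclic projection in `M` -/
def IsCyclicProjection (p : H →L[ℂ] H) : Prop :=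
  IsProjectionIn M p ∧ ∃ ξ : H, IsGeneratingVector M p ξ

/-- The self-adjoint part `M_*^{sa}` of the predual: those `ω ∈ M_*` with
`ω (x*) = conj (ω x)` for all `x ∈ M`; a real-linear subspace of `M_*`. -/
def predualSA : Submodule ℝ ↥(predual M) where
  carrier := {ω | ∀ (x : H →L[ℂ] H) (hx : x ∈ M),
    (ω : ↥(carrier M) →L[ℂ] ℂ) ⟨star x, (mem_carrier M).mpr (star_mem hx)⟩ =
      conj ((ω : ↥(carrier M) →L[ℂ] ℂ) ⟨x, hx⟩)}
  add_mem' := by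
    intro a b ha hb x hx
    simp only [Submodule.coe_add, ContinuousLinearMap.add_apply, ha x hx, hb x hx, map_add]
  zero_mem' := by
    intro x hx
    simp only [ZeroMemClass.coe_zero, ContinuousLinearMap.zero_apply, map_zero]
  smul_mem' := by
    intro r ω hω x hx
    simp only [SetLike.val_smul_of_tower, ContinuousLinearMap.coe_smul', Pi.smul_apply, hω x hx]
    rw [show (conj ((ω : ↥(carrier M) →L[ℂ] ℂ) ⟨x, hx⟩)) = star ((ω : ↥(carrier M) →L[ℂ] ℂ) ⟨x, hx⟩) from rfl,
      show (conj (r • (ω : ↥(carrier M) →L[ℂ] ℂ) ⟨x, hx⟩)) = star (r • (ω : ↥(carrier M) →L[ℂ] ℂ) ⟨x, hx⟩) from rfl,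
      star_smul, star_trivial r]

instance (priority := 10000) : NormedAddCommGroup ↥(predualSA M) := inferInstance
instance (priority := 10000) : NormedSpace ℝ ↥(predualSA M) := inferInstance
instance (priority := 10000) : NormedAddCommGroup (↥(predualSA M) →L[ℝ] ℝ) := inferInstance
instance (priority := 10000) : NormedSpace ℝ (↥(predualSA M) →L[ℝ] ℝ) := inferInstance


/-- For a projection `p ∈ M`, the subspace `L_p M_* = {φ ∈ M_* : φ(x) = φ(p x)}` of the
predual. -/
def leftPart (p : H →L[ℂ] H) (hp : p ∈ M) : Submodule ℂ ↥(predual M) where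
  carrier := {φ | ∀ (x : H →L[ℂ] H) (hx : x ∈ M),
    (φ : ↥(carrier M) →L[ℂ] ℂ) ⟨x, hx⟩ =
      (φ : ↥(carrier M) →L[ℂ] ℂ) ⟨p * x, (mem_carrier M).mpr (mul_mem hp hx)⟩}
  add_mem' := by
    intro a b ha hb x hx
    simp only [Submodule.coe_add, ContinuousLinearMap.add_apply, ha x hx, hb x hx]
  zero_mem' := by
    intro x hx
    simp only [ZeroMemClass.coe_zero, ContinuousLinearMap.zero_apply]
  smul_mem' := by
    intro c φ hφ x hx
    simp only [SetLike.val_smul, ContinuousLinearMap.coe_smul', Pi.smul_apply, hφ x hx]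

/-- For a projection `p ∈ M`, the subspace `R_p M_* = {φ ∈ M_* : φ(x) = φ(x p)}` of the
predual. -/
def rightPart (p : H →L[ℂ] H) (hp : p ∈ M) : Submodule ℂ ↥(predual M) where
  carrier := {φ | ∀ (x : H →L[ℂ] H) (hx : x ∈ M),
    (φ : ↥(carrier M) →L[ℂ] ℂ) ⟨x, hx⟩ =
      (φ : ↥(carrier M) →L[ℂ] ℂ) ⟨x * p, (mem_carrier M).mpr (mul_mem hx hp)⟩}
  add_mem' := by
    intro a b ha hb x hx
    simp only [Submodule.coe_add, ContinuousLinearMap.add_apply, ha x hx, hb x hx]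
  zero_mem' := by
    intro x hx
    simp only [ZeroMemClass.coe_zero, ContinuousLinearMap.zero_apply]
  smul_mem' := by
    intro c φ hφ x hx
    simp only [SetLike.val_smul, ContinuousLinearMap.coe_smul', Pi.smul_apply, hφ x hx]

instance (priority := 10000) (p : H →L[ℂ] H) (hp : p ∈ M) :
    NormedAddCommGroup ↥(leftPart M p hp) := inferInstance
instance (priority := 10000) (p : H →L[ℂ] H) (hp : p ∈ M) :
    NormedSpace ℂ ↥(leftPart M p hp) := inferInstance
instance (priority := 10000) (p : H →L[ℂ] H) (hp : p ∈ M) :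
    NormedAddCommGroup ↥(rightPart M p hp) := inferInstance
instance (priority := 10000) (p : H →L[ℂ] H) (hp : p ∈ M) :
    NormedSpace ℂ ↥(rightPart M p hp) := inferInstance

/-! ### Auxiliary material -/

section Aux

open ContinuousLinearMap InnerProductSpace

/-- Norm of a projection is at most one. -/
lemma norm_le_one_of_proj {p : H →L[ℂ] H} (hsa : IsSelfAdjoint p) (hpp : p * p = p) :
    ‖p‖ ≤ 1 := by
  have h := CStarRing.norm_star_mul_self (x := p)
  rw [hsa.star_eq, hpp] at h
  nlinarith [norm_nonneg p]

/-- Riesz-type representation: every bounded linear functional on the dual of a Hilbert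
space is evaluation at a vector. -/
lemma exists_eval (g : StrongDual ℂ H →ₗ[ℂ] ℂ) (C : ℝ)
    (hg : ∀ f, ‖g f‖ ≤ C * ‖f‖) : ∃ w : H, ∀ f : H →L[ℂ] ℂ, g f = f w := by
  let G₀ : H →ₗ[ℂ] ℂ :=
    { toFun := fun η => conj (g (toDual ℂ H η))
      map_add' := by intro a b; simp [map_add]
      map_smul' := by
        intro c a
        simp only [LinearIsometryEquiv.map_smulₛₗ, map_smul, smul_eq_mul, map_mul,
          RingHom.id_apply, starRingEnd_self_apply] }
  have hG₀ : ∀ η, ‖G₀ η‖ ≤ C * ‖η‖ := by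
    intro η
    have h1 : ‖G₀ η‖ = ‖g (toDual ℂ H η)‖ := RCLike.norm_conj _
    rw [h1]
    simpa using hg (toDual ℂ H η)
  let G : H →L[ℂ] ℂ := LinearMap.mkContinuous G₀ C hG₀
  refine ⟨(toDual ℂ H).symm G, fun f => ?_⟩
  have h1 : (toDual ℂ H) ((toDual ℂ H).symm f) = f := (toDual ℂ H).apply_symm_apply f
  set η := (toDual ℂ H).symm f with hη
  have h2 : conj (g f) = G η := by rw [← h1]; rfl
  have h3 : (inner ℂ ((toDual ℂ H).symm G) η : ℂ) = G η := toDual_symm_apply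
  have h4 : f ((toDual ℂ H).symm G) = inner ℂ η ((toDual ℂ H).symm G) := by
    rw [← h1]; exact toDual_apply_apply
  rw [h4, ← inner_conj_symm, h3, ← h2, Complex.conj_conj]

variable {M}

/-- The functional `x ↦ f (x ξ)` on `M`, for `f` in the dual of `H`. -/
def dualFunctional (ξ : H) (f : H →L[ℂ] ℂ) : ↥(carrier M) →L[ℂ] ℂ :=
  f.comp ((ContinuousLinearMap.apply ℂ H ξ).comp (carrier M).subtypeL)

lemma dualFunctional_apply (ξ : H) (f : H →L[ℂ] ℂ) (x : ↥(carrier M)) :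
    dualFunctional ξ f x = f ((x : H →L[ℂ] H) ξ) := rfl

lemma vecFunctional_eq_dualFunctional (ξ η : H) :
    vecFunctional M ξ η = dualFunctional ξ (innerSL ℂ η) := rfl

lemma dualFunctional_eq_vecFunctional (ξ : H) (f : H →L[ℂ] ℂ) :
    (dualFunctional ξ f : ↥(carrier M) →L[ℂ] ℂ)
      = vecFunctional M ξ ((toDual ℂ H).symm f) := by
  rw [vecFunctional_eq_dualFunctional]
  congr 1
  ext v
  exact (toDual_symm_apply).symm

lemma dualFunctional_mem_predual (ξ : H) (f : H →L[ℂ] ℂ) :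
    (dualFunctional ξ f : ↥(carrier M) →L[ℂ] ℂ) ∈ predual M := by
  rw [dualFunctional_eq_vecFunctional]
  exact vecFunctional_mem_predual M _ _

lemma norm_dualFunctional_le (ξ : H) (f : H →L[ℂ] ℂ) :
    ‖(dualFunctional ξ f : ↥(carrier M) →L[ℂ] ℂ)‖ ≤ ‖ξ‖ * ‖f‖ := by
  apply ContinuousLinearMap.opNorm_le_bound _ (by positivity)
  intro x
  rw [dualFunctional_apply]
  calc ‖f ((x : H →L[ℂ] H) ξ)‖ ≤ ‖f‖ * ‖(x : H →L[ℂ] H) ξ‖ := f.le_opNorm _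
    _ ≤ ‖f‖ * (‖(x : H →L[ℂ] H)‖ * ‖ξ‖) := by
        gcongr; exact (x : H →L[ℂ] H).le_opNorm ξ
    _ = ‖ξ‖ * ‖f‖ * ‖x‖ := by rw [show ‖(x : H →L[ℂ] H)‖ = ‖x‖ from rfl]; ring

lemma norm_vecFunctional_le (ξ η : H) :
    ‖vecFunctional M ξ η‖ ≤ ‖η‖ * ‖ξ‖ := by
  apply ContinuousLinearMap.opNorm_le_bound _ (by positivity)
  intro x
  rw [vecFunctional_apply]
  calc ‖(inner ℂ η ((x : H →L[ℂ] H) ξ) : ℂ)‖ ≤ ‖η‖ * ‖(x : H →L[ℂ] H) ξ‖ :=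
        norm_inner_le_norm _ _
    _ ≤ ‖η‖ * (‖(x : H →L[ℂ] H)‖ * ‖ξ‖) := by
        gcongr; exact (x : H →L[ℂ] H).le_opNorm ξ
    _ = ‖η‖ * ‖ξ‖ * ‖x‖ := by rw [show ‖(x : H →L[ℂ] H)‖ = ‖x‖ from rfl]; ring

lemma vecFunctional_sub_left (u v η : H) :
    vecFunctional M u η - vecFunctional M v η = vecFunctional M (u - v) η := by
  ext x
  simp only [ContinuousLinearMap.coe_sub', Pi.sub_apply, vecFunctional_apply, map_sub,
    inner_sub_right]

lemma vecFunctional_sub_right (ξ η η' : H) :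
    vecFunctional M ξ η - vecFunctional M ξ η' = vecFunctional M ξ (η - η') := by
  ext x
  simp only [ContinuousLinearMap.coe_sub', Pi.sub_apply, vecFunctional_apply, inner_sub_left]

lemma generating_fixed {p : H →L[ℂ] H} (hpp : p * p = p) {ξ : H}
    (hgen : IsGeneratingVector M p ξ) : p ξ = ξ := by
  have hξ : ξ ∈ Set.range p := by
    rw [← hgen]
    exact subset_closure ⟨1, one_mem _, by simp⟩
  obtain ⟨w, rfl⟩ := hξ
  have := congrArg (fun q : H →L[ℂ] H => q w) hpp
  simpa [ContinuousLinearMap.mul_apply] using this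

/-- Right multiplication by `p`, as an operator on `M`. -/
def rmulOp (p : H →L[ℂ] H) (hpM : p ∈ M) (hsa : IsSelfAdjoint p) (hpp : p * p = p) :
    ↥(carrier M) →L[ℂ] ↥(carrier M) :=
  LinearMap.mkContinuous
    { toFun := fun x => ⟨(x : H →L[ℂ] H) * p,
        (mem_carrier M).mpr (mul_mem ((mem_carrier M).mp x.2) hpM)⟩
      map_add' := fun x y => Subtype.ext (add_mul _ _ _)
      map_smul' := fun c x => Subtype.ext (smul_mul_assoc c _ _) }
    1
    (fun x => by
      have h1 : ‖(x : H →L[ℂ] H) * p‖ ≤ ‖(x : H →L[ℂ] H)‖ * ‖p‖ := norm_mul_le _ _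
      have h2 : ‖p‖ ≤ 1 := norm_le_one_of_proj hsa hpp
      show ‖(x : H →L[ℂ] H) * p‖ ≤ 1 * ‖x‖
      rw [show ‖x‖ = ‖(x : H →L[ℂ] H)‖ from rfl]
      nlinarith [norm_nonneg (x : H →L[ℂ] H), norm_nonneg p])

/-- Left multiplication by `p`, as an operator on `M`. -/
def lmulOp (p : H →L[ℂ] H) (hpM : p ∈ M) (hsa : IsSelfAdjoint p) (hpp : p * p = p) :
    ↥(carrier M) →L[ℂ] ↥(carrier M) :=
  LinearMap.mkContinuous
    { toFun := fun x => ⟨p * (x : H →L[ℂ] H),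
        (mem_carrier M).mpr (mul_mem hpM ((mem_carrier M).mp x.2))⟩
      map_add' := fun x y => Subtype.ext (mul_add _ _ _)
      map_smul' := fun c x => Subtype.ext (mul_smul_comm c _ _) }
    1
    (fun x => by
      have h1 : ‖p * (x : H →L[ℂ] H)‖ ≤ ‖p‖ * ‖(x : H →L[ℂ] H)‖ := norm_mul_le _ _
      have h2 : ‖p‖ ≤ 1 := norm_le_one_of_proj hsa hpp
      show ‖p * (x : H →L[ℂ] H)‖ ≤ 1 * ‖x‖
      rw [show ‖x‖ = ‖(x : H →L[ℂ] H)‖ from rfl]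
      nlinarith [norm_nonneg (x : H →L[ℂ] H), norm_nonneg p])

lemma dualFunctional_mem_rightPart {p : H →L[ℂ] H} (hpM : p ∈ M) {ξ : H}
    (hfix : p ξ = ξ) (f : H →L[ℂ] ℂ) :
    (⟨dualFunctional ξ f, dualFunctional_mem_predual ξ f⟩ : ↥(predual M))
      ∈ rightPart M p hpM := by
  intro x hx
  show f (x ξ) = f ((x * p) ξ)
  rw [ContinuousLinearMap.mul_apply, hfix]

lemma vecFunctional_mem_leftPart {p : H →L[ℂ] H} (hpM : p ∈ M)
    (hsa : IsSelfAdjoint p) {ξ : H} (hfix : p ξ = ξ) (ζ : H) :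
    (⟨vecFunctional M ζ ξ, vecFunctional_mem_predual M ζ ξ⟩ : ↥(predual M))
      ∈ leftPart M p hpM := by
  intro x hx
  show (inner ℂ ξ (x ζ) : ℂ) = inner ℂ ξ ((p * x) ζ)
  rw [ContinuousLinearMap.mul_apply, ← ContinuousLinearMap.adjoint_inner_left p (x ζ) ξ,
    hsa.adjoint_eq, hfix]

/-- The bundled map `f ↦ (x ↦ f (x ξ))` into `R_p M_*`. -/
def WR {p : H →L[ℂ] H} (hpM : p ∈ M) {ξ : H} (hfix : p ξ = ξ) :
    StrongDual ℂ H →L[ℂ] ↥(rightPart M p hpM) :=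
  LinearMap.mkContinuous
    { toFun := fun f => ⟨⟨dualFunctional ξ f, dualFunctional_mem_predual ξ f⟩,
        dualFunctional_mem_rightPart hpM hfix f⟩
      map_add' := fun f g => Subtype.ext (Subtype.ext (ContinuousLinearMap.add_comp _ _ _))
      map_smul' := fun c f => Subtype.ext (Subtype.ext (ContinuousLinearMap.smul_comp _ _ _)) }
    ‖ξ‖
    (fun f => norm_dualFunctional_le ξ f)

/-- The bundled map `ζ ↦ (x ↦ ⟪ξ, x ζ⟫)` into `L_p M_*`. -/
def WL {p : H →L[ℂ] H} (hpM : p ∈ M) (hsa : IsSelfAdjoint p) {ξ : H} (hfix : p ξ = ξ) :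
    H →L[ℂ] ↥(leftPart M p hpM) :=
  LinearMap.mkContinuous
    { toFun := fun ζ => ⟨⟨vecFunctional M ζ ξ, vecFunctional_mem_predual M ζ ξ⟩,
        vecFunctional_mem_leftPart hpM hsa hfix ζ⟩
      map_add' := fun ζ ζ' => Subtype.ext (Subtype.ext (by
        ext x
        show (inner ℂ ξ ((x : H →L[ℂ] H) (ζ + ζ')) : ℂ)
          = inner ℂ ξ ((x : H →L[ℂ] H) ζ) + inner ℂ ξ ((x : H →L[ℂ] H) ζ')
        rw [map_add, inner_add_right]))
      map_smul' := fun c ζ => Subtype.ext (Subtype.ext (by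
        ext x
        show (inner ℂ ξ ((x : H →L[ℂ] H) (c • ζ)) : ℂ) = c * inner ℂ ξ ((x : H →L[ℂ] H) ζ)
        rw [map_smul, inner_smul_right])) }
    ‖ξ‖
    (fun ζ => by
      have := norm_vecFunctional_le (M := M) ζ ξ
      calc ‖vecFunctional M ζ ξ‖ ≤ ‖ξ‖ * ‖ζ‖ := this
        _ = ‖ξ‖ * ‖ζ‖ := rfl)

lemma WR_mem_span {p : H →L[ℂ] H} (hpM : p ∈ M) {ξ : H} (hfix : p ξ = ξ)
    (f : H →L[ℂ] ℂ) :
    WR (M := M) hpM hfix f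
      ∈ Submodule.span ℂ (WR (M := M) hpM hfix '' Metric.closedBall 0 1) := by
  rcases eq_or_ne f 0 with rfl | hf
  · rw [map_zero]; exact Submodule.zero_mem _
  · have hn : ((‖f‖ : ℝ) : ℂ) ≠ 0 := by exact_mod_cast norm_ne_zero_iff.mpr hf
    have h1 : WR (M := M) hpM hfix f
        = ((‖f‖ : ℝ) : ℂ) • WR (M := M) hpM hfix (((‖f‖ : ℝ) : ℂ)⁻¹ • f) := by
      rw [← map_smul, smul_smul, mul_inv_cancel₀ hn, one_smul]
    rw [h1]
    refine Submodule.smul_mem _ _ (Submodule.subset_span ⟨((‖f‖ : ℝ) : ℂ)⁻¹ • f, ?_, rfl⟩)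
    rw [Metric.mem_closedBall, dist_zero_right, norm_smul, norm_inv,
      show ‖((‖f‖ : ℝ) : ℂ)‖ = ‖f‖ from by simp,
      inv_mul_cancel₀ (norm_ne_zero_iff.mpr hf)]

lemma WL_mem_span {p : H →L[ℂ] H} (hpM : p ∈ M) (hsa : IsSelfAdjoint p) {ξ : H}
    (hfix : p ξ = ξ) (ζ : H) :
    WL (M := M) hpM hsa hfix ζ
      ∈ Submodule.span ℂ ((fun f : StrongDual ℂ H =>
          WL (M := M) hpM hsa hfix ((InnerProductSpace.toDual ℂ H).symm f))
        '' Metric.closedBall 0 1) := by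
  rcases eq_or_ne ζ 0 with rfl | hζ
  · rw [map_zero]; exact Submodule.zero_mem _
  · have hn : ((‖ζ‖ : ℝ) : ℂ) ≠ 0 := by exact_mod_cast norm_ne_zero_iff.mpr hζ
    have h1 : WL (M := M) hpM hsa hfix ζ
        = ((‖ζ‖ : ℝ) : ℂ) • WL (M := M) hpM hsa hfix (((‖ζ‖ : ℝ) : ℂ)⁻¹ • ζ) := by
      rw [← map_smul, smul_smul, mul_inv_cancel₀ hn, one_smul]
    rw [h1]
    refine Submodule.smul_mem _ _ (Submodule.subset_span
      ⟨InnerProductSpace.toDual ℂ H (((‖ζ‖ : ℝ) : ℂ)⁻¹ • ζ), ?_, ?_⟩)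
    · rw [Metric.mem_closedBall, dist_zero_right, LinearIsometryEquiv.norm_map, norm_smul,
        norm_inv, show ‖((‖ζ‖ : ℝ) : ℂ)‖ = ‖ζ‖ from by simp,
        inv_mul_cancel₀ (norm_ne_zero_iff.mpr hζ)]
    · simp only [LinearIsometryEquiv.symm_apply_apply]

lemma dense_span_right {p : H →L[ℂ] H} (hpM : p ∈ M) (hsa : IsSelfAdjoint p)
    (hpp : p * p = p) {ξ : H} (hgen : IsGeneratingVector M p ξ) (hfix : p ξ = ξ) :
    Dense (Submodule.span ℂ (WR (M := M) hpM hfix '' Metric.closedBall 0 1)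
      : Set ↥(rightPart M p hpM)) := by
  intro φ
  rw [Metric.mem_closure_iff]
  intro ε hε
  have h1 : ((φ : ↥(predual M)) : ↥(carrier M) →L[ℂ] ℂ) ∈
      closure ((Submodule.span ℂ {ψ | ∃ ζ η : H, ψ = vecFunctional M ζ η}
        : Submodule ℂ (↥(carrier M) →L[ℂ] ℂ)) : Set _) := (φ : ↥(predual M)).2
  obtain ⟨ψ₀, hψ₀mem, hψ₀⟩ := Metric.mem_closure_iff.mp h1 (ε / 2) (by positivity)
  set R := rmulOp (M := M) p hpM hsa hpp with hRdef
  have hnormR : ‖R‖ ≤ 1 := LinearMap.mkContinuous_norm_le _ zero_le_one _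
  have hCφ : ((φ : ↥(predual M)) : ↥(carrier M) →L[ℂ] ℂ).comp R
      = ((φ : ↥(predual M)) : ↥(carrier M) →L[ℂ] ℂ) := by
    ext x
    exact (φ.2 x.1 ((mem_carrier M).mp x.2)).symm
  have key : ∀ ω, ω ∈ Submodule.span ℂ {ψ | ∃ ζ η : H, ψ = vecFunctional M ζ η} →
      ∀ δ : ℝ, 0 < δ → ∃ f : H →L[ℂ] ℂ,
        ‖ω.comp R - dualFunctional (M := M) ξ f‖ < δ := by
    intro ω hω
    induction hω using Submodule.span_induction with
    | mem ω hωs =>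
      obtain ⟨ζ, η, rfl⟩ := hωs
      intro δ hδ
      have hcomp : (vecFunctional M ζ η).comp R = vecFunctional M (p ζ) η := by
        ext x
        show (inner ℂ η (((x : H →L[ℂ] H) * p) ζ) : ℂ)
          = inner ℂ η ((x : H →L[ℂ] H) (p ζ))
        rw [ContinuousLinearMap.mul_apply]
      have hmem2 : p ζ ∈ closure {v : H | ∃ a ∈ M.commutant, v = a ξ} := by
        rw [hgen]; exact ⟨ζ, rfl⟩
      obtain ⟨v, hv, hdist⟩ := Metric.mem_closure_iff.mp hmem2 (δ / (‖η‖ + 1))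
        (by positivity)
      obtain ⟨a, haM, rfl⟩ := hv
      refine ⟨innerSL ℂ (ContinuousLinearMap.adjoint a η), ?_⟩
      have heq : (dualFunctional ξ (innerSL ℂ (ContinuousLinearMap.adjoint a η))
          : ↥(carrier M) →L[ℂ] ℂ) = vecFunctional M (a ξ) η := by
        ext x
        show (inner ℂ (ContinuousLinearMap.adjoint a η) ((x : H →L[ℂ] H) ξ) : ℂ)
          = inner ℂ η ((x : H →L[ℂ] H) (a ξ))
        rw [ContinuousLinearMap.adjoint_inner_left]
        congr 1
        rw [← ContinuousLinearMap.mul_apply, ← ContinuousLinearMap.mul_apply,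
          ← VonNeumannAlgebra.mem_commutant_iff.mp haM (x : H →L[ℂ] H)
            ((mem_carrier M).mp x.2)]
      rw [hcomp, heq, vecFunctional_sub_left]
      have hb := norm_vecFunctional_le (M := M) (p ζ - a ξ) η
      have hd : ‖p ζ - a ξ‖ < δ / (‖η‖ + 1) := by rwa [dist_eq_norm] at hdist
      have h5 : ‖p ζ - a ξ‖ * (‖η‖ + 1) < δ := by
        rw [lt_div_iff₀ (by positivity)] at hd
        linarith
      calc ‖vecFunctional M (p ζ - a ξ) η‖ ≤ ‖η‖ * ‖p ζ - a ξ‖ := hb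
        _ < δ := by nlinarith [norm_nonneg (p ζ - a ξ)]
    | zero =>
      intro δ hδ
      refine ⟨0, ?_⟩
      have e1 : (0 : ↥(carrier M) →L[ℂ] ℂ).comp R = 0 := ContinuousLinearMap.zero_comp R
      have e2 : (dualFunctional (M := M) ξ (0 : H →L[ℂ] ℂ)) = 0 :=
        ContinuousLinearMap.zero_comp _
      rw [e1, e2, sub_zero, norm_zero]
      exact hδ
    | add ω₁ ω₂ h₁ h₂ ih₁ ih₂ =>
      intro δ hδ
      obtain ⟨f₁, hf₁⟩ := ih₁ (δ / 2) (by positivity)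
      obtain ⟨f₂, hf₂⟩ := ih₂ (δ / 2) (by positivity)
      refine ⟨f₁ + f₂, ?_⟩
      have e1 : (ω₁ + ω₂).comp R = ω₁.comp R + ω₂.comp R :=
        ContinuousLinearMap.add_comp ω₁ ω₂ R
      have e2 : (dualFunctional (M := M) ξ (f₁ + f₂))
          = dualFunctional ξ f₁ + dualFunctional ξ f₂ :=
        ContinuousLinearMap.add_comp _ _ _
      rw [e1, e2]
      have e3 : ω₁.comp R + ω₂.comp R
            - ((dualFunctional (M := M) ξ f₁) + dualFunctional ξ f₂)
          = (ω₁.comp R - dualFunctional ξ f₁) + (ω₂.comp R - dualFunctional ξ f₂) := by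
        abel
      rw [e3]
      calc ‖(ω₁.comp R - dualFunctional (M := M) ξ f₁)
            + (ω₂.comp R - dualFunctional ξ f₂)‖
          ≤ ‖ω₁.comp R - dualFunctional (M := M) ξ f₁‖
            + ‖ω₂.comp R - dualFunctional ξ f₂‖ := norm_add_le _ _
        _ < δ / 2 + δ / 2 := add_lt_add hf₁ hf₂
        _ = δ := by ring
    | smul c ω hω ih =>
      intro δ hδ
      rcases eq_or_ne c 0 with rfl | hc
      · refine ⟨0, ?_⟩
        have e2 : dualFunctional (M := M) ξ (0 : H →L[ℂ] ℂ) = 0 :=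
          ContinuousLinearMap.zero_comp _
        have e1 : ((0 : ℂ) • ω).comp R = 0 := by
          rw [zero_smul]; exact ContinuousLinearMap.zero_comp R
        rw [e1, e2, sub_zero, norm_zero]
        exact hδ
      · have hcpos : (0 : ℝ) < ‖c‖ := norm_pos_iff.mpr hc
        obtain ⟨f, hf⟩ := ih (δ / ‖c‖) (by positivity)
        refine ⟨c • f, ?_⟩
        have e1 : (c • ω).comp R = c • ω.comp R := ContinuousLinearMap.smul_comp c ω R
        have e2 : dualFunctional (M := M) ξ (c • f) = c • dualFunctional ξ f :=
          ContinuousLinearMap.smul_comp _ _ _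
        rw [e1, e2, ← smul_sub, norm_smul]
        calc ‖c‖ * ‖ω.comp R - dualFunctional (M := M) ξ f‖
            < ‖c‖ * (δ / ‖c‖) := by
              exact mul_lt_mul_of_pos_left hf hcpos
          _ = δ := by rw [mul_comm, div_mul_cancel₀ δ (ne_of_gt hcpos)]
  obtain ⟨f, hf⟩ := key ψ₀ hψ₀mem (ε / 2) (by positivity)
  refine ⟨WR (M := M) hpM hfix f, WR_mem_span hpM hfix f, ?_⟩
  have hdd : dist φ (WR (M := M) hpM hfix f)
      = ‖((φ : ↥(predual M)) : ↥(carrier M) →L[ℂ] ℂ) - dualFunctional ξ f‖ := by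
    rw [Subtype.dist_eq, Subtype.dist_eq, dist_eq_norm]
    rfl
  rw [hdd]
  have t1 : ((φ : ↥(predual M)) : ↥(carrier M) →L[ℂ] ℂ) - dualFunctional ξ f
      = (((φ : ↥(predual M)) : ↥(carrier M) →L[ℂ] ℂ) - ψ₀).comp R
        + (ψ₀.comp R - dualFunctional ξ f) := by
    rw [ContinuousLinearMap.sub_comp, hCφ]
    abel
  rw [t1]
  have b1 : ‖(((φ : ↥(predual M)) : ↥(carrier M) →L[ℂ] ℂ) - ψ₀).comp R‖
      ≤ ‖((φ : ↥(predual M)) : ↥(carrier M) →L[ℂ] ℂ) - ψ₀‖ * ‖R‖ :=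
    ContinuousLinearMap.opNorm_comp_le _ _
  have b2 : ‖((φ : ↥(predual M)) : ↥(carrier M) →L[ℂ] ℂ) - ψ₀‖ < ε / 2 := by
    rw [← dist_eq_norm]; exact hψ₀
  calc ‖(((φ : ↥(predual M)) : ↥(carrier M) →L[ℂ] ℂ) - ψ₀).comp R
        + (ψ₀.comp R - dualFunctional ξ f)‖
      ≤ ‖(((φ : ↥(predual M)) : ↥(carrier M) →L[ℂ] ℂ) - ψ₀).comp R‖
        + ‖ψ₀.comp R - dualFunctional ξ f‖ := norm_add_le _ _
    _ < ε / 2 + ε / 2 := by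
        refine add_lt_add_of_le_of_lt ?_ hf
        calc ‖(((φ : ↥(predual M)) : ↥(carrier M) →L[ℂ] ℂ) - ψ₀).comp R‖
            ≤ ‖((φ : ↥(predual M)) : ↥(carrier M) →L[ℂ] ℂ) - ψ₀‖ * ‖R‖ := b1
          _ ≤ ‖((φ : ↥(predual M)) : ↥(carrier M) →L[ℂ] ℂ) - ψ₀‖ * 1 := by
              gcongr
          _ = ‖((φ : ↥(predual M)) : ↥(carrier M) →L[ℂ] ℂ) - ψ₀‖ := mul_one _
          _ ≤ ε / 2 := le_of_lt b2
    _ = ε := by ring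

lemma dense_span_left {p : H →L[ℂ] H} (hpM : p ∈ M) (hsa : IsSelfAdjoint p)
    (hpp : p * p = p) {ξ : H} (hgen : IsGeneratingVector M p ξ) (hfix : p ξ = ξ) :
    Dense (Submodule.span ℂ ((fun f : StrongDual ℂ H =>
          WL (M := M) hpM hsa hfix ((InnerProductSpace.toDual ℂ H).symm f))
        '' Metric.closedBall 0 1)
      : Set ↥(leftPart M p hpM)) := by
  intro φ
  rw [Metric.mem_closure_iff]
  intro ε hε
  have h1 : ((φ : ↥(predual M)) : ↥(carrier M) →L[ℂ] ℂ) ∈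
      closure ((Submodule.span ℂ {ψ | ∃ ζ η : H, ψ = vecFunctional M ζ η}
        : Submodule ℂ (↥(carrier M) →L[ℂ] ℂ)) : Set _) := (φ : ↥(predual M)).2
  obtain ⟨ψ₀, hψ₀mem, hψ₀⟩ := Metric.mem_closure_iff.mp h1 (ε / 2) (by positivity)
  set L := lmulOp (M := M) p hpM hsa hpp with hLdef
  have hnormL : ‖L‖ ≤ 1 := LinearMap.mkContinuous_norm_le _ zero_le_one _
  have hCφ : ((φ : ↥(predual M)) : ↥(carrier M) →L[ℂ] ℂ).comp L
      = ((φ : ↥(predual M)) : ↥(carrier M) →L[ℂ] ℂ) := by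
    ext x
    exact (φ.2 x.1 ((mem_carrier M).mp x.2)).symm
  have key : ∀ ω, ω ∈ Submodule.span ℂ {ψ | ∃ ζ η : H, ψ = vecFunctional M ζ η} →
      ∀ δ : ℝ, 0 < δ → ∃ ζ' : H,
        ‖ω.comp L - vecFunctional M ζ' ξ‖ < δ := by
    intro ω hω
    induction hω using Submodule.span_induction with
    | mem ω hωs =>
      obtain ⟨ζ, η, rfl⟩ := hωs
      intro δ hδ
      have hcomp : (vecFunctional M ζ η).comp L = vecFunctional M ζ (p η) := by
        ext x
        show (inner ℂ η ((p * (x : H →L[ℂ] H)) ζ) : ℂ)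
          = inner ℂ (p η) ((x : H →L[ℂ] H) ζ)
        rw [ContinuousLinearMap.mul_apply,
          ← ContinuousLinearMap.adjoint_inner_left p ((x : H →L[ℂ] H) ζ) η,
          hsa.adjoint_eq]
      have hmem2 : p η ∈ closure {v : H | ∃ a ∈ M.commutant, v = a ξ} := by
        rw [hgen]; exact ⟨η, rfl⟩
      obtain ⟨v, hv, hdist⟩ := Metric.mem_closure_iff.mp hmem2 (δ / (‖ζ‖ + 1))
        (by positivity)
      obtain ⟨a, haM, rfl⟩ := hv
      refine ⟨ContinuousLinearMap.adjoint a ζ, ?_⟩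
      have hstar : ContinuousLinearMap.adjoint a ∈ M.commutant := by
        rw [← ContinuousLinearMap.star_eq_adjoint]
        exact star_mem haM
      have heq : vecFunctional M (ContinuousLinearMap.adjoint a ζ) ξ
          = vecFunctional M ζ (a ξ) := by
        ext x
        show (inner ℂ ξ ((x : H →L[ℂ] H) (ContinuousLinearMap.adjoint a ζ)) : ℂ)
          = inner ℂ (a ξ) ((x : H →L[ℂ] H) ζ)
        rw [← ContinuousLinearMap.adjoint_inner_right a ξ ((x : H →L[ℂ] H) ζ)]
        congr 1
        rw [← ContinuousLinearMap.mul_apply, ← ContinuousLinearMap.mul_apply,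
          VonNeumannAlgebra.mem_commutant_iff.mp hstar (x : H →L[ℂ] H)
            ((mem_carrier M).mp x.2)]
      rw [hcomp, heq, vecFunctional_sub_right]
      have hb := norm_vecFunctional_le (M := M) ζ (p η - a ξ)
      have hd : ‖p η - a ξ‖ < δ / (‖ζ‖ + 1) := by rwa [dist_eq_norm] at hdist
      have h5 : ‖p η - a ξ‖ * (‖ζ‖ + 1) < δ := by
        rw [lt_div_iff₀ (by positivity)] at hd
        linarith
      calc ‖vecFunctional M ζ (p η - a ξ)‖ ≤ ‖p η - a ξ‖ * ‖ζ‖ := hb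
        _ < δ := by nlinarith [norm_nonneg (p η - a ξ)]
    | zero =>
      intro δ hδ
      refine ⟨0, ?_⟩
      have e1 : (0 : ↥(carrier M) →L[ℂ] ℂ).comp L = 0 := ContinuousLinearMap.zero_comp L
      have e2 : vecFunctional M (0 : H) ξ = 0 := by
        ext x
        show (inner ℂ ξ ((x : H →L[ℂ] H) 0) : ℂ) = 0
        rw [map_zero, inner_zero_right]
      rw [e1, e2, sub_zero, norm_zero]
      exact hδ
    | add ω₁ ω₂ h₁ h₂ ih₁ ih₂ =>
      intro δ hδ
      obtain ⟨ζ₁, hf₁⟩ := ih₁ (δ / 2) (by positivity)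
      obtain ⟨ζ₂, hf₂⟩ := ih₂ (δ / 2) (by positivity)
      refine ⟨ζ₁ + ζ₂, ?_⟩
      have e1 : (ω₁ + ω₂).comp L = ω₁.comp L + ω₂.comp L :=
        ContinuousLinearMap.add_comp ω₁ ω₂ L
      have e2 : vecFunctional M (ζ₁ + ζ₂) ξ
          = vecFunctional M ζ₁ ξ + vecFunctional M ζ₂ ξ := by
        ext x
        show (inner ℂ ξ ((x : H →L[ℂ] H) (ζ₁ + ζ₂)) : ℂ)
          = inner ℂ ξ ((x : H →L[ℂ] H) ζ₁) + inner ℂ ξ ((x : H →L[ℂ] H) ζ₂)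
        rw [map_add, inner_add_right]
      rw [e1, e2]
      have e3 : ω₁.comp L + ω₂.comp L
            - (vecFunctional M ζ₁ ξ + vecFunctional M ζ₂ ξ)
          = (ω₁.comp L - vecFunctional M ζ₁ ξ) + (ω₂.comp L - vecFunctional M ζ₂ ξ) := by
        abel
      rw [e3]
      calc ‖(ω₁.comp L - vecFunctional M ζ₁ ξ) + (ω₂.comp L - vecFunctional M ζ₂ ξ)‖
          ≤ ‖ω₁.comp L - vecFunctional M ζ₁ ξ‖ + ‖ω₂.comp L - vecFunctional M ζ₂ ξ‖ :=
            norm_add_le _ _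
        _ < δ / 2 + δ / 2 := add_lt_add hf₁ hf₂
        _ = δ := by ring
    | smul c ω hω ih =>
      intro δ hδ
      rcases eq_or_ne c 0 with rfl | hc
      · refine ⟨0, ?_⟩
        have e2 : vecFunctional M (0 : H) ξ = 0 := by
          ext x
          show (inner ℂ ξ ((x : H →L[ℂ] H) 0) : ℂ) = 0
          rw [map_zero, inner_zero_right]
        have e1 : ((0 : ℂ) • ω).comp L = 0 := by
          rw [zero_smul]; exact ContinuousLinearMap.zero_comp L
        rw [e1, e2, sub_zero, norm_zero]
        exact hδ
      · have hcpos : (0 : ℝ) < ‖c‖ := norm_pos_iff.mpr hc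
        obtain ⟨ζ', hf⟩ := ih (δ / ‖c‖) (by positivity)
        refine ⟨c • ζ', ?_⟩
        have e1 : (c • ω).comp L = c • ω.comp L := ContinuousLinearMap.smul_comp c ω L
        have e2 : vecFunctional M (c • ζ') ξ = c • vecFunctional M ζ' ξ := by
          ext x
          show (inner ℂ ξ ((x : H →L[ℂ] H) (c • ζ')) : ℂ)
            = c * inner ℂ ξ ((x : H →L[ℂ] H) ζ')
          rw [map_smul, inner_smul_right]
        rw [e1, e2, ← smul_sub, norm_smul]
        calc ‖c‖ * ‖ω.comp L - vecFunctional M ζ' ξ‖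
            < ‖c‖ * (δ / ‖c‖) := mul_lt_mul_of_pos_left hf hcpos
          _ = δ := by rw [mul_comm, div_mul_cancel₀ δ (ne_of_gt hcpos)]
  obtain ⟨ζ', hf⟩ := key ψ₀ hψ₀mem (ε / 2) (by positivity)
  refine ⟨WL (M := M) hpM hsa hfix ζ', WL_mem_span hpM hsa hfix ζ', ?_⟩
  have hdd : dist φ (WL (M := M) hpM hsa hfix ζ')
      = ‖((φ : ↥(predual M)) : ↥(carrier M) →L[ℂ] ℂ) - vecFunctional M ζ' ξ‖ := by
    rw [Subtype.dist_eq, Subtype.dist_eq, dist_eq_norm]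
    rfl
  rw [hdd]
  have t1 : ((φ : ↥(predual M)) : ↥(carrier M) →L[ℂ] ℂ) - vecFunctional M ζ' ξ
      = (((φ : ↥(predual M)) : ↥(carrier M) →L[ℂ] ℂ) - ψ₀).comp L
        + (ψ₀.comp L - vecFunctional M ζ' ξ) := by
    rw [ContinuousLinearMap.sub_comp, hCφ]
    abel
  rw [t1]
  have b1 : ‖(((φ : ↥(predual M)) : ↥(carrier M) →L[ℂ] ℂ) - ψ₀).comp L‖
      ≤ ‖((φ : ↥(predual M)) : ↥(carrier M) →L[ℂ] ℂ) - ψ₀‖ * ‖L‖ :=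
    ContinuousLinearMap.opNorm_comp_le _ _
  have b2 : ‖((φ : ↥(predual M)) : ↥(carrier M) →L[ℂ] ℂ) - ψ₀‖ < ε / 2 := by
    rw [← dist_eq_norm]; exact hψ₀
  calc ‖(((φ : ↥(predual M)) : ↥(carrier M) →L[ℂ] ℂ) - ψ₀).comp L
        + (ψ₀.comp L - vecFunctional M ζ' ξ)‖
      ≤ ‖(((φ : ↥(predual M)) : ↥(carrier M) →L[ℂ] ℂ) - ψ₀).comp L‖
        + ‖ψ₀.comp L - vecFunctional M ζ' ξ‖ := norm_add_le _ _
    _ < ε / 2 + ε / 2 := by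
        refine add_lt_add_of_le_of_lt ?_ hf
        calc ‖(((φ : ↥(predual M)) : ↥(carrier M) →L[ℂ] ℂ) - ψ₀).comp L‖
            ≤ ‖((φ : ↥(predual M)) : ↥(carrier M) →L[ℂ] ℂ) - ψ₀‖ * ‖L‖ := b1
          _ ≤ ‖((φ : ↥(predual M)) : ↥(carrier M) →L[ℂ] ℂ) - ψ₀‖ * 1 := by
              gcongr
          _ = ‖((φ : ↥(predual M)) : ↥(carrier M) →L[ℂ] ℂ) - ψ₀‖ := mul_one _
          _ ≤ ε / 2 := le_of_lt b2
    _ = ε := by ring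

lemma isCompact_right {p : H →L[ℂ] H} (hpM : p ∈ M) {ξ : H} (hfix : p ξ = ξ) :
    IsCompact (toWeakSpaceCLM ℂ ↥(rightPart M p hpM) ''
      (WR (M := M) hpM hfix '' Metric.closedBall 0 1)) := by
  have hball : IsCompact
      (WeakDual.toStrongDual ⁻¹' Metric.closedBall (0 : StrongDual ℂ H) 1) :=
    WeakDual.isCompact_closedBall (𝕜 := ℂ) (E := H) 0 1
  have hcont : Continuous fun f : WeakDual ℂ H =>
      toWeakSpaceCLM ℂ ↥(rightPart M p hpM)
        (WR (M := M) hpM hfix (WeakDual.toStrongDual f)) := by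
    apply WeakBilin.continuous_of_continuous_eval
    intro ψ
    obtain ⟨w, hw⟩ := exists_eval
      ((ψ.comp (WR (M := M) hpM hfix)).toLinearMap) ‖ψ.comp (WR (M := M) hpM hfix)‖
      (fun f => (ψ.comp (WR (M := M) hpM hfix)).le_opNorm f)
    refine (WeakDual.eval_continuous w).congr fun f => ?_
    exact (hw f).symm
  have himg := hball.image hcont
  convert himg using 1
  rw [Set.image_image]
  rfl

lemma isCompact_left {p : H →L[ℂ] H} (hpM : p ∈ M) (hsa : IsSelfAdjoint p) {ξ : H}
    (hfix : p ξ = ξ) :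
    IsCompact (toWeakSpaceCLM ℂ ↥(leftPart M p hpM) ''
      ((fun f : StrongDual ℂ H =>
          WL (M := M) hpM hsa hfix ((InnerProductSpace.toDual ℂ H).symm f))
        '' Metric.closedBall 0 1)) := by
  have hball : IsCompact
      (WeakDual.toStrongDual ⁻¹' Metric.closedBall (0 : StrongDual ℂ H) 1) :=
    WeakDual.isCompact_closedBall (𝕜 := ℂ) (E := H) 0 1
  have hcont : Continuous fun f : WeakDual ℂ H =>
      toWeakSpaceCLM ℂ ↥(leftPart M p hpM)
        (WL (M := M) hpM hsa hfix
          ((InnerProductSpace.toDual ℂ H).symm (WeakDual.toStrongDual f))) := by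
    apply WeakBilin.continuous_of_continuous_eval
    intro ψ
    set A := ψ.comp (WL (M := M) hpM hsa hfix) with hA
    let g : StrongDual ℂ H →ₗ[ℂ] ℂ :=
      { toFun := fun f => conj (A ((InnerProductSpace.toDual ℂ H).symm f))
        map_add' := by intro f₁ f₂; simp only [map_add]
        map_smul' := by
          intro c f
          simp only [LinearIsometryEquiv.map_smulₛₗ, map_smul, smul_eq_mul, map_mul,
            starRingEnd_self_apply, RingHom.id_apply] }
    have hgb : ∀ f, ‖g f‖ ≤ ‖A‖ * ‖f‖ := by
      intro f
      have h1 : ‖g f‖ = ‖A ((InnerProductSpace.toDual ℂ H).symm f)‖ := RCLike.norm_conj _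
      rw [h1]
      calc ‖A ((InnerProductSpace.toDual ℂ H).symm f)‖
          ≤ ‖A‖ * ‖(InnerProductSpace.toDual ℂ H).symm f‖ := A.le_opNorm _
        _ = ‖A‖ * ‖f‖ := by rw [LinearIsometryEquiv.norm_map]
    obtain ⟨w, hw⟩ := exists_eval g ‖A‖ hgb
    refine ((WeakDual.eval_continuous w).star).congr fun f => ?_
    have h2 : A ((InnerProductSpace.toDual ℂ H).symm f) = conj (g f) :=
      (Complex.conj_conj _).symm
    have h3 : conj (g f) = conj ((f : H →L[ℂ] ℂ) w) := congrArg (starRingEnd ℂ) (hw f)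
    exact ((h2.trans h3)).symm
  have himg := hball.image hcont
  convert himg using 1
  rw [Set.image_image]
  rfl

end Aux

/-- **Lemma.** If `p ∈ M` is a cyclic projection, then the subspaces `L_p M_*` and
`R_p M_*` of the predual are weakly compactly generated. -/
theorem leftPart_rightPart_wcg (p : H →L[ℂ] H) (hp : IsCyclicProjection M p) :
    (∃ K : Set ↥(leftPart M p hp.1.1),
      IsCompact (toWeakSpaceCLM ℂ ↥(leftPart M p hp.1.1) '' K) ∧
      Dense (Submodule.span ℂ K : Set ↥(leftPart M p hp.1.1))) ∧
    (∃ K : Set ↥(rightPart M p hp.1.1),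
      IsCompact (toWeakSpaceCLM ℂ ↥(rightPart M p hp.1.1) '' K) ∧
      Dense (Submodule.span ℂ K : Set ↥(rightPart M p hp.1.1))) := by
  obtain ⟨ξ, hgen⟩ := hp.2
  have hpM : p ∈ M := hp.1.1
  have hsa : IsSelfAdjoint p := hp.1.2.1
  have hpp : p * p = p := hp.1.2.2
  have hfix : p ξ = ξ := generating_fixed hpp hgen
  constructor
  · exact ⟨(fun f : StrongDual ℂ H =>
        WL (M := M) hp.1.1 hsa hfix ((InnerProductSpace.toDual ℂ H).symm f))
        '' Metric.closedBall 0 1,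
      isCompact_left hp.1.1 hsa hfix, dense_span_left hp.1.1 hsa hpp hgen hfix⟩
  · exact ⟨WR (M := M) hp.1.1 hfix '' Metric.closedBall 0 1,
      isCompact_right hp.1.1 hfix, dense_span_right hp.1.1 hsa hpp hgen hfix⟩


end Paper
end
end

section
/- Let H be a complex Hilbert space, M ⊆ B(H) a von Neumann algebra, and (p_λ)_{λ∈Λ} a family of mutually orthogonal cyclic projections in M (p_λ p_μ = 0 for λ ≠ μ). Then for every x ∈ M and every λ ∈ Λ, the sets {μ ∈ Λ : p_λ x p_μ ≠ 0} and {μ ∈ Λ : p_μ x p_λ ≠ 0} are countable. -/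
set_option synthInstance.maxHeartbeats 1000000
set_option maxHeartbeats 1000000

noncomputable section

namespace Paper

open scoped ComplexConjugate

variable {H : Type*} [NormedAddCommGroup H] [InnerProductSpace ℂ H] [CompleteSpace H]

variable (M : VonNeumannAlgebra H)

/-- Auxiliary: for a family of pairwise orthogonal self-adjoint idempotents and a fixed
vector `η`, only countably many `p m η` are nonzero. -/
theorem countable_proj_apply_ne_zero
    {Λ : Type*} (p : Λ → (H →L[ℂ] H))
    (hsa : ∀ m, IsSelfAdjoint (p m)) (hidem : ∀ m, p m * p m = p m)
    (horth : ∀ l m, l ≠ m → p l * p m = 0) (η : H) :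
    {m : Λ | p m η ≠ 0}.Countable := by
  -- inner product identities
  have hinner : ∀ m (u v : H), inner ℂ (p m u) v = (inner ℂ u (p m v) : ℂ) := by
    intro m u v
    have := ((ContinuousLinearMap.isSelfAdjoint_iff_isSymmetric).mp (hsa m)) u v
    exact this
  have hsq : ∀ m, (inner ℂ (p m η) η : ℂ) = (‖p m η‖ : ℂ) ^ 2 := by
    intro m
    have hpp : p m (p m η) = p m η := by
      have := congrArg (fun f : H →L[ℂ] H => f η) (hidem m)
      simpa [ContinuousLinearMap.mul_apply] using this
    have h1 : (inner ℂ (p m η) (p m η) : ℂ) = inner ℂ (p m η) η :=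
      calc (inner ℂ (p m η) (p m η) : ℂ)
          = inner ℂ η (p m (p m η)) := hinner m η (p m η)
        _ = inner ℂ η (p m η) := by rw [hpp]
        _ = inner ℂ (p m η) η := (hinner m η η).symm
    rw [← h1, inner_self_eq_norm_sq_to_K]
    norm_num
  classical
  -- orthonormal family on the support
  set S : Set Λ := {m : Λ | p m η ≠ 0} with hS
  let e : S → H := fun m => (‖p (m : Λ) η‖ : ℂ)⁻¹ • p (m : Λ) η
  have he : Orthonormal ℂ e := by
    rw [orthonormal_iff_ite]
    intro i j
    by_cases hij : i = j
    · subst hij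
      simp only [if_pos rfl, e, inner_smul_left, inner_smul_right]
      rw [inner_self_eq_norm_sq_to_K]
      have hne : (‖p (i : Λ) η‖ : ℂ) ≠ 0 := by
        exact_mod_cast norm_ne_zero_iff.mpr i.2
      field_simp
      rw [if_pos trivial, one_div, map_inv₀, Complex.conj_ofReal, mul_one, pow_two, ← mul_assoc]
      field_simp
      rfl
    · have hij' : (i : Λ) ≠ (j : Λ) := fun h => hij (Subtype.ext h)
      simp only [if_neg hij, e, inner_smul_left, inner_smul_right]
      have : (inner ℂ (p (i : Λ) η) (p (j : Λ) η) : ℂ) = 0 := by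
        rw [hinner]
        have : p (i : Λ) (p (j : Λ) η) = 0 := by
          have := horth _ _ hij'
          calc p (i : Λ) (p (j : Λ) η) = (p (i : Λ) * p (j : Λ)) η := rfl
            _ = 0 := by rw [this]; rfl
        rw [this, inner_zero_right]
      rw [this, mul_zero, mul_zero]
  -- Bessel: summable inner products
  have hsum : Summable fun i : S => ‖(inner ℂ (e i) η : ℂ)‖ ^ 2 :=
    he.inner_products_summable η
  have hpos : ∀ i : S, ‖(inner ℂ (e i) η : ℂ)‖ ^ 2 ≠ 0 := by
    intro i
    have hne : (‖p (i : Λ) η‖ : ℂ) ≠ 0 := by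
      exact_mod_cast norm_ne_zero_iff.mpr i.2
    have hval : (inner ℂ (e i) η : ℂ) = (‖p (i : Λ) η‖ : ℂ) := by
      simp only [e, inner_smul_left, map_inv₀, Complex.conj_ofReal, hsq]
      field_simp
    rw [hval]
    simpa using hne
  have hcs := hsum.countable_support
  have : Function.support (fun i : S => ‖(inner ℂ (e i) η : ℂ)‖ ^ 2) = Set.univ :=
    Set.eq_univ_of_forall fun i => hpos i
  rw [this] at hcs
  have : Countable S := by
    rw [Set.countable_univ_iff] at hcs
    exact hcs
  exact Set.to_countable S

/-- Auxiliary: if `ξ` generates `p l`, `y ∈ M`, and `p m (y ξ) = 0`, then `p m * y * p l = 0`. -/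
theorem reduce_to_vector
    {Λ : Type*} (p : Λ → (H →L[ℂ] H)) (hmem : ∀ m, p m ∈ M)
    (y : H →L[ℂ] H) (hy : y ∈ M) (l : Λ) (ξ : H)
    (hgen : IsGeneratingVector M (p l) ξ) (m : Λ) (h0 : p m (y ξ) = 0) :
    p m * y * p l = 0 := by
  have key : Set.range (p l) ⊆ {u : H | p m (y u) = 0} := by
    rw [← hgen]
    apply closure_minimal
    · rintro v ⟨a, ha, rfl⟩
      have hcomm : a * (p m * y) = (p m * y) * a :=
        (VonNeumannAlgebra.mem_commutant_iff.mp ha (p m * y) (mul_mem (hmem m) hy)).symm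
      have : (p m * y) (a ξ) = a ((p m * y) ξ) := by
        have := congrArg (fun f : H →L[ℂ] H => f ξ) hcomm
        simpa [ContinuousLinearMap.mul_apply] using this.symm
      simpa [ContinuousLinearMap.mul_apply, h0] using this
    · exact isClosed_eq (((p m).comp y).continuous) continuous_const
  ext v
  have : p l v ∈ Set.range (p l) := ⟨v, rfl⟩
  have := key this
  simpa [ContinuousLinearMap.mul_apply] using this

/-- **Lemma.** If `(p_λ)_{λ ∈ Λ}` is a family of mutually orthogonal cyclic projections in
`M`, then for every `x ∈ M` and `λ ∈ Λ` the sets `{μ : p_λ x p_μ ≠ 0}` and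
`{μ : p_μ x p_λ ≠ 0}` are countable. -/
theorem countable_nonorthogonal_of_cyclic_family
    {Λ : Type*} (p : Λ → (H →L[ℂ] H))
    (hcyc : ∀ l, IsCyclicProjection M (p l))
    (horth : ∀ l m, l ≠ m → p l * p m = 0)
    (x : H →L[ℂ] H) (hx : x ∈ M) (l : Λ) :
    {m : Λ | p l * x * p m ≠ 0}.Countable ∧ {m : Λ | p m * x * p l ≠ 0}.Countable := by
  obtain ⟨⟨hpl, hsal, hideml⟩, ξ, hξ⟩ := hcyc l
  have hmem : ∀ m, p m ∈ M := fun m => (hcyc m).1.1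
  have hsa : ∀ m, IsSelfAdjoint (p m) := fun m => (hcyc m).1.2.1
  have hidem : ∀ m, p m * p m = p m := fun m => (hcyc m).1.2.2
  constructor
  · -- {m | p l * x * p m ≠ 0} : use adjoints
    have hsub : {m : Λ | p l * x * p m ≠ 0} ⊆ {m : Λ | p m ((star x) ξ) ≠ 0} := by
      intro m hm
      simp only [Set.mem_setOf_eq] at hm ⊢
      intro h0
      apply hm
      have := reduce_to_vector M p hmem (star x) (star_mem hx) l ξ hξ m h0
      have hst : star (p l * x * p m) = p m * star x * p l := by
        rw [star_mul, star_mul, (hsa m).star_eq, (hsa l).star_eq, mul_assoc]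
      have : star (p l * x * p m) = 0 := by rw [hst]; exact this
      have := congrArg star this
      simpa using this
    exact (countable_proj_apply_ne_zero p hsa hidem horth ((star x) ξ)).mono hsub
  · have hsub : {m : Λ | p m * x * p l ≠ 0} ⊆ {m : Λ | p m (x ξ) ≠ 0} := by
      intro m hm
      simp only [Set.mem_setOf_eq] at hm ⊢
      intro h0
      exact hm (reduce_to_vector M p hmem x hx l ξ hξ m h0)
    exact (countable_proj_apply_ne_zero p hsa hidem horth (x ξ)).mono hsub


end Paper
end
end

section
/- Let H be a complex Hilbert space, M ⊆ B(H) a von Neumann algebra, and x ∈ M. Then there exists a family (q_j)_{j∈J} of mutually orthogonal σ-finite projections in M such that q_j x = q_j x q_j for each j and x = Σ_{j∈J} q_j x q_j in the strong operator topology, i.e., for every vector η ∈ H the family (q_j x q_j η)_{j∈J} is summable in H with sum x η. -/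
set_option synthInstance.maxHeartbeats 1000000
set_option maxHeartbeats 1000000

noncomputable section

namespace Paper

open scoped ComplexConjugate

variable {H : Type*} [NormedAddCommGroup H] [InnerProductSpace ℂ H] [CompleteSpace H]

variable (M : VonNeumannAlgebra H)

/-! ### Auxiliary material for the decomposition theorem -/

section Aux

open scoped InnerProductSpace

/-- Move a self-adjoint operator across the inner product. -/
theorem inner_selfAdjoint_apply {p : H →L[ℂ] H} (hp : IsSelfAdjoint p) (u v : H) :
    ⟪p u, v⟫_ℂ = ⟪u, p v⟫_ℂ := by
  nth_rewrite 1 [← hp.star_eq]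
  rw [ContinuousLinearMap.star_eq_adjoint]
  exact ContinuousLinearMap.adjoint_inner_left p v u

theorem inner_apply_self_of_proj {e : H →L[ℂ] H} (hsa : IsSelfAdjoint e) (hid : e * e = e)
    (u : H) : ⟪u, e u⟫_ℂ = ⟪e u, e u⟫_ℂ := by
  have h := inner_selfAdjoint_apply hsa u (e u)
  rw [← ContinuousLinearMap.mul_apply, hid] at h
  exact h.symm

theorem re_inner_apply_self_of_proj {e : H →L[ℂ] H} (hsa : IsSelfAdjoint e) (hid : e * e = e)
    (u : H) : RCLike.re ⟪u, e u⟫_ℂ = ‖e u‖ ^ 2 := by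
  rw [inner_apply_self_of_proj hsa hid u]
  exact @inner_self_eq_norm_sq ℂ H _ _ _ (e u)

theorem norm_apply_le_of_proj {e : H →L[ℂ] H} (hsa : IsSelfAdjoint e) (hid : e * e = e)
    (u : H) : ‖e u‖ ≤ ‖u‖ := by
  have h1 := re_inner_apply_self_of_proj hsa hid u
  have h2 := re_inner_le_norm (𝕜 := ℂ) u (e u)
  rw [h1] at h2
  rcases le_or_gt ‖e u‖ 0 with h | h
  · exact h.trans (norm_nonneg u)
  · nlinarith

theorem isSelfAdjoint_finset_sum {ι : Type*} (g : ι → (H →L[ℂ] H)) (F : Finset ι)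
    (hsa : ∀ i ∈ F, IsSelfAdjoint (g i)) : IsSelfAdjoint (∑ i ∈ F, g i) := by
  rw [IsSelfAdjoint, star_sum]
  exact Finset.sum_congr rfl fun i hi => (hsa i hi).star_eq

theorem finset_sum_proj_idem {ι : Type*} (g : ι → (H →L[ℂ] H)) (F : Finset ι)
    (hid : ∀ i ∈ F, g i * g i = g i)
    (horth : ∀ i ∈ F, ∀ j ∈ F, i ≠ j → g i * g j = 0) :
    (∑ i ∈ F, g i) * (∑ j ∈ F, g j) = ∑ i ∈ F, g i := by
  classical
  rw [Finset.sum_mul_sum]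
  refine Finset.sum_congr rfl fun i hi => ?_
  rw [Finset.sum_eq_single_of_mem i hi]
  · exact hid i hi
  · intro j hj hji
    exact horth i hi j hj (Ne.symm hji)

theorem sum_sq_proj_eq {ι : Type*} (g : ι → (H →L[ℂ] H)) (F : Finset ι)
    (hsa : ∀ i ∈ F, IsSelfAdjoint (g i)) (hid : ∀ i ∈ F, g i * g i = g i)
    (horth : ∀ i ∈ F, ∀ j ∈ F, i ≠ j → g i * g j = 0) (u : H) :
    ∑ i ∈ F, ‖g i u‖ ^ 2 = ‖(∑ i ∈ F, g i) u‖ ^ 2 := by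
  have hesa : IsSelfAdjoint (∑ i ∈ F, g i) := isSelfAdjoint_finset_sum g F hsa
  have heid := finset_sum_proj_idem g F hid horth
  have h3 : ‖(∑ i ∈ F, g i) u‖ ^ 2 = ∑ i ∈ F, ‖g i u‖ ^ 2 := by
    rw [← re_inner_apply_self_of_proj hesa heid u, ContinuousLinearMap.sum_apply, inner_sum,
      map_sum]
    exact Finset.sum_congr rfl fun i hi =>
      re_inner_apply_self_of_proj (hsa i hi) (hid i hi) u
  exact h3.symm

theorem sum_sq_proj_le {ι : Type*} (g : ι → (H →L[ℂ] H)) (F : Finset ι)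
    (hsa : ∀ i ∈ F, IsSelfAdjoint (g i)) (hid : ∀ i ∈ F, g i * g i = g i)
    (horth : ∀ i ∈ F, ∀ j ∈ F, i ≠ j → g i * g j = 0) (u : H) :
    ∑ i ∈ F, ‖g i u‖ ^ 2 ≤ ‖u‖ ^ 2 := by
  rw [sum_sq_proj_eq g F hsa hid horth u]
  have h := norm_apply_le_of_proj (isSelfAdjoint_finset_sum g F hsa)
    (finset_sum_proj_idem g F hid horth) u
  exact pow_le_pow_left₀ (norm_nonneg _) h 2

/-- A family of pairwise-orthogonal self-adjoint idempotents is nonzero at a given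
vector only countably often. -/
theorem countable_proj_apply_ne_zero_s14 (P : Set (H →L[ℂ] H))
    (hP : ∀ p ∈ P, IsSelfAdjoint p ∧ p * p = p)
    (horth : ∀ p ∈ P, ∀ r ∈ P, p ≠ r → p * r = 0) (u : H) :
    {p ∈ P | p u ≠ 0}.Countable := by
  have hsum : Summable (fun p : P => ‖(p : H →L[ℂ] H) u‖ ^ 2) := by
    apply summable_of_sum_le (fun p => sq_nonneg _)
    intro F
    exact sum_sq_proj_le (fun p : P => (p : H →L[ℂ] H)) F
      (fun i _ => (hP i i.2).1) (fun i _ => (hP i i.2).2)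
      (fun i _ j _ hij => horth i i.2 j j.2 (fun h => hij (Subtype.ext h))) u
  have hcs := hsum.countable_support
  have himg : {p ∈ P | p u ≠ 0} =
      Subtype.val '' (Function.support fun p : P => ‖(p : H →L[ℂ] H) u‖ ^ 2) := by
    ext p
    simp only [Set.mem_setOf_eq, Set.mem_image, Function.mem_support]
    constructor
    · rintro ⟨hp, hpu⟩
      refine ⟨⟨p, hp⟩, ?_, rfl⟩
      simp only [ne_eq, pow_eq_zero_iff, norm_eq_zero]
      exact fun h => hpu (by simpa using h)
    · rintro ⟨⟨p', hp'⟩, hne, rfl⟩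
      refine ⟨hp', fun h => hne ?_⟩
      simp [h]
  rw [himg]
  exact hcs.image _

/-- The orthogonal projection onto a complete subspace, as an endomorphism of `H`. -/
def projCLM (K : Submodule ℂ H) [CompleteSpace K] : H →L[ℂ] H :=
  K.subtypeL.comp (K.orthogonalProjectionOnto)

theorem projCLM_apply_mem (K : Submodule ℂ H) [CompleteSpace K] (v : H) :
    projCLM K v ∈ K := (K.orthogonalProjectionOnto v).2

theorem projCLM_eq_self (K : Submodule ℂ H) [CompleteSpace K] {v : H} (hv : v ∈ K) :
    projCLM K v = v := Submodule.starProjection_eq_self_iff.mpr hv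

theorem projCLM_eq_zero (K : Submodule ℂ H) [CompleteSpace K] {v : H} (hv : v ∈ Kᗮ) :
    projCLM K v = 0 := by
  have := Submodule.orthogonalProjectionOnto_apply_of_mem_orthogonal hv
  simp only [projCLM, ContinuousLinearMap.comp_apply, this, Submodule.subtypeL_apply,
    ZeroMemClass.coe_zero]

theorem projCLM_isSelfAdjoint (K : Submodule ℂ H) [CompleteSpace K] :
    IsSelfAdjoint (projCLM K) := isSelfAdjoint_starProjection K

theorem projCLM_idem (K : Submodule ℂ H) [CompleteSpace K] :
    projCLM K * projCLM K = projCLM K := by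
  ext v
  exact projCLM_eq_self K (projCLM_apply_mem K v)

/-- An operator leaving a complete subspace and (via its adjoint) its orthocomplement
invariant commutes with the orthogonal projection. -/
theorem projCLM_comm {K : Submodule ℂ H} [CompleteSpace K] {y : H →L[ℂ] H}
    (h1 : ∀ v ∈ K, y v ∈ K) (h2 : ∀ v ∈ K, (star y) v ∈ K) :
    y * projCLM K = projCLM K * y := by
  ext v
  have hperp : v - projCLM K v ∈ Kᗮ := Submodule.sub_starProjection_mem_orthogonal v
  have hyperp : y (v - projCLM K v) ∈ Kᗮ := by
    rw [Submodule.mem_orthogonal]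
    intro k hk
    have h3 : ⟪(star y) k, v - projCLM K v⟫_ℂ = 0 :=
      (Submodule.mem_orthogonal K _).mp hperp _ (h2 k hk)
    rw [← h3, ContinuousLinearMap.star_eq_adjoint]
    exact (ContinuousLinearMap.adjoint_inner_left y (v - projCLM K v) k).symm
  have hsplit : y v = y (projCLM K v) + y (v - projCLM K v) := by
    rw [← map_add]
    congr 1
    abel
  calc (y * projCLM K) v = y (projCLM K v) := rfl
    _ = projCLM K (y (projCLM K v)) + projCLM K (y (v - projCLM K v)) := by
        rw [projCLM_eq_self K (h1 _ (projCLM_apply_mem K v)), projCLM_eq_zero K hyperp, add_zero]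
    _ = projCLM K (y v) := by rw [← map_add, ← hsplit]
    _ = (projCLM K * y) v := rfl

theorem clm_maps_span {s : Set H} {y : H →L[ℂ] H} (h : ∀ v ∈ s, y v ∈ s) :
    ∀ v ∈ Submodule.span ℂ s, y v ∈ Submodule.span ℂ s := by
  intro v hv
  induction hv using Submodule.span_induction with
  | mem w hw => exact Submodule.subset_span (h w hw)
  | zero => simp
  | add a b _ _ ha hb => rw [map_add]; exact Submodule.add_mem _ ha hb
  | smul c a _ ha => rw [map_smul]; exact Submodule.smul_mem _ c ha

theorem clm_maps_closure {K : Submodule ℂ H} {y : H →L[ℂ] H} (h : ∀ v ∈ K, y v ∈ K) :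
    ∀ v ∈ K.topologicalClosure, y v ∈ K.topologicalClosure := by
  intro v hv
  exact map_mem_closure y.continuous hv h

theorem clm_zero_on_closure {q : H →L[ℂ] H} {s : Set H} (h : ∀ v ∈ s, q v = 0) :
    ∀ v ∈ (Submodule.span ℂ s).topologicalClosure, q v = 0 := by
  have h1 : Submodule.span ℂ s ≤ LinearMap.ker (q : H →ₗ[ℂ] H) := by
    rw [Submodule.span_le]
    intro v hv
    exact LinearMap.mem_ker.mpr (h v hv)
  have h2 : (Submodule.span ℂ s).topologicalClosure ≤ LinearMap.ker (q : H →ₗ[ℂ] H) :=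
    Submodule.topologicalClosure_minimal _ h1 (ContinuousLinearMap.isClosed_ker q)
  exact fun v hv => LinearMap.mem_ker.mp (h2 hv)

/-- The operator associated to a word in `x` and `star x`. -/
def wordOp (x : H →L[ℂ] H) (l : List Bool) : H →L[ℂ] H :=
  (l.map fun b => if b then x else star x).prod

theorem wordOp_nil (x : H →L[ℂ] H) : wordOp x [] = 1 := rfl

theorem wordOp_cons (x : H →L[ℂ] H) (b : Bool) (l : List Bool) :
    wordOp x (b :: l) = (if b then x else star x) * wordOp x l := by
  simp [wordOp]

theorem wordOp_mem (x : H →L[ℂ] H) (hx : x ∈ M) (l : List Bool) : wordOp x l ∈ M := by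
  induction l with
  | nil => rw [wordOp_nil]; exact one_mem M
  | cons b l ih =>
    rw [wordOp_cons]
    exact mul_mem (by cases b <;> simp [hx, star_mem hx]) ih

theorem wordOp_comm {x q : H →L[ℂ] H} (h1 : q * x = x * q) (h2 : q * star x = star x * q)
    (l : List Bool) : q * wordOp x l = wordOp x l * q := by
  induction l with
  | nil => rw [wordOp_nil, one_mul, mul_one]
  | cons b l ih =>
    have hb : q * (if b then x else star x) = (if b then x else star x) * q := by
      cases b
      · simpa using h2
      · simpa using h1
    rw [wordOp_cons]
    calc q * ((if b then x else star x) * wordOp x l)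
        = (q * (if b then x else star x)) * wordOp x l := by rw [mul_assoc]
      _ = ((if b then x else star x) * q) * wordOp x l := by rw [hb]
      _ = (if b then x else star x) * (q * wordOp x l) := by rw [mul_assoc]
      _ = (if b then x else star x) * (wordOp x l * q) := by rw [ih]
      _ = ((if b then x else star x) * wordOp x l) * q := by rw [mul_assoc]

/-- The generating set for the cyclic-type subspace attached to `ζ`. -/
def genSet (x : H →L[ℂ] H) (ζ : H) : Set H :=
  {v | ∃ a ∈ M.commutant, ∃ l : List Bool, v = a (wordOp x l ζ)}

/-- The closed subspace generated from `ζ` by `M'` and the *-algebra generated by `x`. -/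
def genspace (x : H →L[ℂ] H) (ζ : H) : Submodule ℂ H :=
  (Submodule.span ℂ (genSet M x ζ)).topologicalClosure

instance (x : H →L[ℂ] H) (ζ : H) : CompleteSpace (genspace M x ζ) :=
  (Submodule.isClosed_topologicalClosure _).completeSpace_coe

/-- The projection onto `genspace`. -/
def genProj (x : H →L[ℂ] H) (ζ : H) : H →L[ℂ] H := projCLM (genspace M x ζ)

theorem genProj_isSelfAdjoint (x : H →L[ℂ] H) (ζ : H) : IsSelfAdjoint (genProj M x ζ) :=
  projCLM_isSelfAdjoint _

theorem genProj_idem (x : H →L[ℂ] H) (ζ : H) : genProj M x ζ * genProj M x ζ = genProj M x ζ :=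
  projCLM_idem _

theorem self_mem_genSet (x : H →L[ℂ] H) (ζ : H) : ζ ∈ genSet M x ζ :=
  ⟨1, one_mem _, [], by simp [wordOp_nil]⟩

theorem self_mem_genspace (x : H →L[ℂ] H) (ζ : H) : ζ ∈ genspace M x ζ :=
  Submodule.le_topologicalClosure _ (Submodule.subset_span (self_mem_genSet M x ζ))

theorem genProj_self (x : H →L[ℂ] H) (ζ : H) : genProj M x ζ ζ = ζ :=
  projCLM_eq_self _ (self_mem_genspace M x ζ)

theorem genSet_maps_commutant (x : H →L[ℂ] H) (ζ : H) {a : H →L[ℂ] H}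
    (ha : a ∈ M.commutant) : ∀ v ∈ genSet M x ζ, a v ∈ genSet M x ζ := by
  rintro v ⟨b, hb, l, rfl⟩
  exact ⟨a * b, mul_mem ha hb, l, rfl⟩

theorem genSet_maps_letter {x : H →L[ℂ] H} (hx : x ∈ M) (ζ : H) (b : Bool) :
    ∀ v ∈ genSet M x ζ, (if b then x else star x) v ∈ genSet M x ζ := by
  rintro v ⟨a, ha, l, rfl⟩
  set y : H →L[ℂ] H := if b then x else star x with hy
  have hyM : y ∈ M := by cases b <;> simp [hy, hx, star_mem hx]
  have hcomm : y * a = a * y := VonNeumannAlgebra.mem_commutant_iff.mp ha y hyM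
  refine ⟨a, ha, b :: l, ?_⟩
  calc y (a (wordOp x l ζ)) = (y * a) (wordOp x l ζ) := rfl
    _ = a (y (wordOp x l ζ)) := by rw [hcomm]; rfl
    _ = a (wordOp x (b :: l) ζ) := by rw [wordOp_cons]; rfl

theorem genspace_maps {x : H →L[ℂ] H} (ζ : H) {y : H →L[ℂ] H}
    (h : ∀ v ∈ genSet M x ζ, y v ∈ genSet M x ζ) :
    ∀ v ∈ genspace M x ζ, y v ∈ genspace M x ζ :=
  clm_maps_closure (clm_maps_span h)

theorem genProj_comm_commutant {x : H →L[ℂ] H} (ζ : H) {a : H →L[ℂ] H}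
    (ha : a ∈ M.commutant) : a * genProj M x ζ = genProj M x ζ * a :=
  projCLM_comm (genspace_maps M ζ (genSet_maps_commutant M x ζ ha))
    (genspace_maps M ζ (genSet_maps_commutant M x ζ (star_mem ha)))

theorem genProj_mem {x : H →L[ℂ] H} (ζ : H) : genProj M x ζ ∈ M := by
  have h2 : genProj M x ζ ∈ Set.centralizer (Set.centralizer (M : Set (H →L[ℂ] H))) := by
    rw [Set.mem_centralizer_iff]
    intro g hg
    exact genProj_comm_commutant M ζ
      (by rw [← SetLike.mem_coe, VonNeumannAlgebra.coe_commutant]; exact hg)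
  rw [M.centralizer_centralizer] at h2
  exact h2

theorem genProj_comm_x {x : H →L[ℂ] H} (hx : x ∈ M) (ζ : H) :
    genProj M x ζ * x = x * genProj M x ζ := by
  have h := projCLM_comm (K := genspace M x ζ)
    (genspace_maps M ζ (by simpa using genSet_maps_letter M hx ζ true))
    (genspace_maps M ζ (by simpa using genSet_maps_letter M hx ζ false))
  exact h.symm

theorem genProj_comm_star_x {x : H →L[ℂ] H} (hx : x ∈ M) (ζ : H) :
    genProj M x ζ * star x = star x * genProj M x ζ := by
  have h := projCLM_comm (K := genspace M x ζ)
    (genspace_maps M ζ (by simpa using genSet_maps_letter M hx ζ false))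
    (genspace_maps M ζ (by simpa [star_star] using genSet_maps_letter M hx ζ true))
  exact h.symm

theorem genProj_isSigmaFinite {x : H →L[ℂ] H} (hx : x ∈ M) (ζ : H) :
    IsSigmaFiniteProjection M (genProj M x ζ) := by
  refine ⟨⟨genProj_mem M ζ, genProj_isSelfAdjoint M x ζ, genProj_idem M x ζ⟩, ?_⟩
  intro P hP horth
  have hcov : P ⊆ ⋃ l : List Bool, {p ∈ P | p (wordOp x l ζ) ≠ 0} := by
    intro p hp
    by_contra hcon
    simp only [Set.mem_iUnion, Set.mem_setOf_eq, not_exists, not_and, not_not] at hcon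
    have hall : ∀ l : List Bool, p (wordOp x l ζ) = 0 := fun l => hcon l hp
    obtain ⟨⟨hpM, hpsa, hpid⟩, hpne, hpeq⟩ := hP p hp
    apply hpne
    have hgen : ∀ v ∈ genSet M x ζ, p v = 0 := by
      rintro v ⟨a, ha, l, rfl⟩
      have hcomm : p * a = a * p := VonNeumannAlgebra.mem_commutant_iff.mp ha p hpM
      calc p (a (wordOp x l ζ)) = (p * a) (wordOp x l ζ) := rfl
        _ = a (p (wordOp x l ζ)) := by rw [hcomm]; rfl
        _ = 0 := by rw [hall l, map_zero]
    have hK : ∀ v ∈ genspace M x ζ, p v = 0 := clm_zero_on_closure hgen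
    ext v
    rw [hpeq]
    show genProj M x ζ (p (genProj M x ζ v)) = (0 : H →L[ℂ] H) v
    have hmem' : genProj M x ζ v ∈ genspace M x ζ := projCLM_apply_mem _ _
    rw [hK (genProj M x ζ v) hmem', map_zero]
    rfl
  refine Set.Countable.mono hcov (Set.countable_iUnion fun l => ?_)
  exact countable_proj_apply_ne_zero_s14 P (fun p hp => ⟨((hP p hp).1).2.1, ((hP p hp).1).2.2⟩)
    horth (wordOp x l ζ)

end Aux

/-- **Proposition.** For every `x ∈ M` there is a family `(q_j)` of mutually orthogonal
σ-finite projections in `M` with `q_j x = q_j x q_j` and `x = Σ_j q_j x q_j` in the strong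
operator topology. -/
theorem exists_orthogonal_sigmaFinite_decomposition (x : H →L[ℂ] H) (hx : x ∈ M) :
    ∃ Q : Set (H →L[ℂ] H),
      (∀ q ∈ Q, IsSigmaFiniteProjection M q) ∧
      (∀ q ∈ Q, ∀ r ∈ Q, q ≠ r → q * r = 0) ∧
      (∀ q ∈ Q, q * x = q * x * q) ∧
      ∀ η : H, HasSum (fun q : Q => ((q : H →L[ℂ] H) * x * (q : H →L[ℂ] H)) η) (x η) := by
  classical
  set S : Set (Set (H →L[ℂ] H)) :=
    {Q | (∀ q ∈ Q, IsSigmaFiniteProjection M q ∧ q ≠ 0 ∧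
            q * x = x * q ∧ q * star x = star x * q) ∧
         ∀ q ∈ Q, ∀ r ∈ Q, q ≠ r → q * r = 0} with hS
  have hchains : ∀ c ⊆ S, IsChain (· ⊆ ·) c → ∃ ub ∈ S, ∀ s ∈ c, s ⊆ ub := by
    intro c hcS hchain
    refine ⟨⋃₀ c, ⟨?_, ?_⟩, fun s hs => Set.subset_sUnion_of_mem hs⟩
    · rintro q ⟨Q1, hQ1, hq1⟩
      exact (hcS hQ1).1 q hq1
    · rintro q ⟨Q1, hQ1, hq1⟩ r ⟨Q2, hQ2, hr2⟩ hqr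
      rcases hchain.total hQ1 hQ2 with h | h
      · exact (hcS hQ2).2 q (h hq1) r hr2 hqr
      · exact (hcS hQ1).2 q hq1 r (h hr2) hqr
  obtain ⟨Q, hQmax⟩ := zorn_subset S hchains
  obtain ⟨hQ1, hQ2⟩ := hQmax.prop
  have hsa : ∀ q ∈ Q, IsSelfAdjoint q := fun q hq => (hQ1 q hq).1.1.2.1
  have hid : ∀ q ∈ Q, q * q = q := fun q hq => (hQ1 q hq).1.1.2.2
  have hmem : ∀ q ∈ Q, q ∈ M := fun q hq => (hQ1 q hq).1.1.1
  have hcx : ∀ q ∈ Q, q * x = x * q := fun q hq => (hQ1 q hq).2.2.1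
  have hcsx : ∀ q ∈ Q, q * star x = star x * q := fun q hq => (hQ1 q hq).2.2.2
  refine ⟨Q, fun q hq => (hQ1 q hq).1, hQ2, ?_, ?_⟩
  · intro q hq
    rw [hcx q hq, mul_assoc, hid q hq]
  · intro η
    -- summability of the family (q η)
    have hsq : Summable (fun q : Q => ‖(q : H →L[ℂ] H) η‖ ^ 2) := by
      apply summable_of_sum_le (fun p => sq_nonneg _)
      intro F
      exact sum_sq_proj_le (fun q : Q => (q : H →L[ℂ] H)) F
        (fun i _ => hsa i i.2) (fun i _ => hid i i.2)
        (fun i _ j _ hij => hQ2 i i.2 j j.2 (fun h => hij (Subtype.ext h))) η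
    have hsummable : Summable (fun q : Q => (q : H →L[ℂ] H) η) := by
      rw [summable_iff_vanishing_norm]
      intro ε hε
      obtain ⟨s, hs⟩ := hsq.vanishing (e := Set.Ioo (-(ε ^ 2)) (ε ^ 2))
        (Ioo_mem_nhds (neg_lt_zero.mpr (by positivity)) (by positivity))
      refine ⟨s, fun t ht => ?_⟩
      have h1 : ∑ q ∈ t, ‖(q : H →L[ℂ] H) η‖ ^ 2 < ε ^ 2 := (hs t ht).2
      have h2 : ∑ q ∈ t, ‖(q : H →L[ℂ] H) η‖ ^ 2 = ‖∑ q ∈ t, (q : H →L[ℂ] H) η‖ ^ 2 := by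
        rw [show (∑ q ∈ t, (q : H →L[ℂ] H) η) = (∑ q ∈ t, (q : H →L[ℂ] H)) η by
          rw [ContinuousLinearMap.sum_apply]]
        exact sum_sq_proj_eq (fun q : Q => (q : H →L[ℂ] H)) t
          (fun i _ => hsa i i.2) (fun i _ => hid i i.2)
          (fun i _ j _ hij => hQ2 i i.2 j j.2 (fun h => hij (Subtype.ext h))) η
      rw [h2] at h1
      nlinarith [norm_nonneg (∑ q ∈ t, (q : H →L[ℂ] H) η)]
    obtain ⟨σ, hσ⟩ := hsummable
    have hqσ : ∀ q ∈ Q, q σ = q η := by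
      intro q hq
      have h1 : HasSum (fun r : Q => q ((r : H →L[ℂ] H) η)) (q σ) := hσ.mapL q
      have h2 : (fun r : Q => q ((r : H →L[ℂ] H) η)) =
          fun r : Q => if r = ⟨q, hq⟩ then q η else 0 := by
        funext r
        by_cases hr : r = ⟨q, hq⟩
        · subst hr
          simp only [if_pos rfl]
          rw [← ContinuousLinearMap.mul_apply, hid q hq]
          simp
        · have hne : q ≠ (r : H →L[ℂ] H) := fun h => hr (Subtype.ext h.symm)
          have h0 : q * (r : H →L[ℂ] H) = 0 := hQ2 q hq r r.2 hne
          rw [if_neg hr, ← ContinuousLinearMap.mul_apply, h0]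
          rfl
      rw [h2] at h1
      exact h1.unique (hasSum_ite_eq (⟨q, hq⟩ : Q) (q η))
    have hση : σ = η := by
      by_contra hne
      set ζ := η - σ with hζdef
      have hζ : ζ ≠ 0 := fun h => hne (by rw [hζdef, sub_eq_zero] at h; exact h.symm)
      have hqζ : ∀ q ∈ Q, q ζ = 0 := by
        intro q hq
        rw [hζdef, map_sub, hqσ q hq, sub_self]
      set p := genProj M x ζ with hp
      have hpζ : p ζ = ζ := genProj_self M x ζ
      have hpne : p ≠ 0 := by
        intro h
        apply hζ
        have h2 := hpζ
        rw [h] at h2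
        simpa using h2.symm
      have hpM : p ∈ M := genProj_mem M ζ
      have hpsa : IsSelfAdjoint p := genProj_isSelfAdjoint M x ζ
      have hpid : p * p = p := genProj_idem M x ζ
      -- each q ∈ Q kills genspace, hence is orthogonal to p
      have horthp : ∀ q ∈ Q, q * p = 0 := by
        intro q hq
        have hgen : ∀ v ∈ genSet M x ζ, q v = 0 := by
          rintro v ⟨a, ha, l, rfl⟩
          have hcomm : q * a = a * q := VonNeumannAlgebra.mem_commutant_iff.mp ha q (hmem q hq)
          have hword : q * wordOp x l = wordOp x l * q := wordOp_comm (hcx q hq) (hcsx q hq) l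
          calc q (a (wordOp x l ζ)) = (q * a) (wordOp x l ζ) := rfl
            _ = a ((q * wordOp x l) ζ) := by rw [hcomm]; rfl
            _ = a ((wordOp x l * q) ζ) := by rw [hword]
            _ = a (wordOp x l (q ζ)) := rfl
            _ = 0 := by rw [hqζ q hq, map_zero, map_zero]
        have hK : ∀ v ∈ genspace M x ζ, q v = 0 := clm_zero_on_closure hgen
        ext v
        show q (genProj M x ζ v) = (0 : H →L[ℂ] H) v
        have hmem' : genProj M x ζ v ∈ genspace M x ζ := projCLM_apply_mem _ _
        rw [hK (genProj M x ζ v) hmem']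
        rfl
      have horthp' : ∀ q ∈ Q, p * q = 0 := by
        intro q hq
        have := congrArg star (horthp q hq)
        rwa [star_mul, (hsa q hq).star_eq, hpsa.star_eq, star_zero] at this
      have hpQ : p ∉ Q := by
        intro hpQ
        have := congrArg (fun f : H →L[ℂ] H => f ζ) (horthp p hpQ)
        simp only [ContinuousLinearMap.mul_apply, hpζ] at this
        exact hζ (by rwa [ContinuousLinearMap.zero_apply] at this)
      have hQS : insert p Q ∈ S := by
        constructor
        · rintro q hq
          rcases Set.mem_insert_iff.mp hq with rfl | hq
          · exact ⟨genProj_isSigmaFinite M hx ζ, hpne,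
              (genProj_comm_x M hx ζ), (genProj_comm_star_x M hx ζ)⟩
          · exact hQ1 q hq
        · rintro q hq r hr hqr
          rcases Set.mem_insert_iff.mp hq with rfl | hq <;>
            rcases Set.mem_insert_iff.mp hr with rfl | hr
          · exact absurd rfl hqr
          · exact horthp' r hr
          · exact horthp q hq
          · exact hQ2 q hq r hr hqr
      have hsub : Q ⊆ insert p Q := Set.subset_insert p Q
      have := hQmax.2 hQS hsub
      exact hpQ (this (Set.mem_insert p Q))
    -- conclude
    have hxσ : HasSum (fun q : Q => x ((q : H →L[ℂ] H) η)) (x η) := by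
      have := hσ.mapL x
      rwa [hση] at this
    convert hxσ using 2 with q
    rw [hcx q q.2, mul_assoc, hid q q.2]
    rfl


end Paper
end
end

section
/- Let H be a complex Hilbert space, M ⊆ B(H) a von Neumann algebra, and (p_λ)_{λ∈Λ} a family of mutually orthogonal cyclic projections in M whose sum is 1 (i.e., for every η ∈ H, Σ_λ p_λ η = η). Then the following four subsets of M coincide: {x ∈ M : {λ : p_λ x ≠ 0} is countable}; {x ∈ M : {λ : x p_λ ≠ 0} is countable}; {x ∈ M : there is a σ-finite projection q ∈ M with q x = x}; {x ∈ M : there is a σ-finite projection q ∈ M with q x q = x}; moreover this common set D is closed under adjoints, is a linear subspace, and is a two-sided ideal in M (a x ∈ D and x a ∈ D for all x ∈ D, a ∈ M). -/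
set_option synthInstance.maxHeartbeats 1000000
set_option maxHeartbeats 1000000
set_option linter.unusedSectionVars false

noncomputable section

namespace Paper

open scoped ComplexConjugate
open scoped InnerProductSpace

variable {H : Type*} [NormedAddCommGroup H] [InnerProductSpace ℂ H] [CompleteSpace H]

variable (M : VonNeumannAlgebra H)

/-- Projection onto the closure of a submodule. -/
def cproj (K : Submodule ℂ H) : H →L[ℂ] H :=
  haveI : CompleteSpace K.topologicalClosure :=
    K.isClosed_topologicalClosure.completeSpace_coe
  (K.topologicalClosure).subtypeL ∘L Submodule.orthogonalProjectionOnto K.topologicalClosure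

theorem cproj_apply_mem (K : Submodule ℂ H) (v : H) : cproj K v ∈ K.topologicalClosure := by
  haveI : CompleteSpace K.topologicalClosure :=
    K.isClosed_topologicalClosure.completeSpace_coe
  exact (Submodule.orthogonalProjectionOnto K.topologicalClosure v).2

theorem cproj_eq_self (K : Submodule ℂ H) {v : H} (hv : v ∈ K.topologicalClosure) :
    cproj K v = v := by
  haveI : CompleteSpace K.topologicalClosure :=
    K.isClosed_topologicalClosure.completeSpace_coe
  exact Submodule.starProjection_eq_self_iff.2 hv

theorem inner_eq_zero_of_closure (K : Submodule ℂ H) {v w : H}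
    (h : ∀ u ∈ K, ⟪u, v⟫_ℂ = 0) (hw : w ∈ K.topologicalClosure) : ⟪w, v⟫_ℂ = 0 := by
  have hcl : w ∈ closure (K : Set H) := hw
  have hsub : (K : Set H) ⊆ {u | ⟪u, v⟫_ℂ = 0} := fun u hu => h u hu
  have hclosed : IsClosed {u : H | ⟪u, v⟫_ℂ = 0} :=
    isClosed_eq (Continuous.inner continuous_id continuous_const) continuous_const
  exact closure_minimal hsub hclosed hcl

theorem cproj_eq_zero_iff (K : Submodule ℂ H) {v : H} :
    cproj K v = 0 ↔ ∀ w ∈ K, ⟪w, v⟫_ℂ = 0 := by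
  haveI : CompleteSpace K.topologicalClosure :=
    K.isClosed_topologicalClosure.completeSpace_coe
  have key : cproj K v = 0 ↔ v ∈ (K.topologicalClosure)ᗮ := by
    constructor
    · intro h
      exact Submodule.orthogonalProjectionOnto_eq_zero_iff.1 (Subtype.ext h)
    · intro h
      show ((Submodule.orthogonalProjectionOnto K.topologicalClosure v : K.topologicalClosure) : H) = 0
      rw [Submodule.orthogonalProjectionOnto_eq_zero_iff.2 h]; rfl
  rw [key]
  constructor
  · intro h w hw
    exact (Submodule.mem_orthogonal _ v).1 h w (Submodule.le_topologicalClosure K hw)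
  · intro h
    exact (Submodule.mem_orthogonal _ v).2 fun w hw => inner_eq_zero_of_closure K h hw

theorem cproj_isSelfAdjoint (K : Submodule ℂ H) : IsSelfAdjoint (cproj K) := by
  haveI : CompleteSpace K.topologicalClosure :=
    K.isClosed_topologicalClosure.completeSpace_coe
  exact isSelfAdjoint_starProjection K.topologicalClosure

theorem cproj_idem (K : Submodule ℂ H) : cproj K * cproj K = cproj K := by
  ext v
  exact cproj_eq_self K (cproj_apply_mem K v)

theorem range_cproj (K : Submodule ℂ H) :
    Set.range (cproj K) = (K.topologicalClosure : Set H) := by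
  apply Set.Subset.antisymm
  · rintro - ⟨v, rfl⟩; exact cproj_apply_mem K v
  · intro v hv; exact ⟨v, cproj_eq_self K hv⟩

theorem cproj_comm (K : Submodule ℂ H) (a : H →L[ℂ] H)
    (ha : ∀ v ∈ K.topologicalClosure, a v ∈ K.topologicalClosure)
    (ha' : ∀ v ∈ K.topologicalClosure, (star a) v ∈ K.topologicalClosure) :
    a * cproj K = cproj K * a := by
  haveI : CompleteSpace K.topologicalClosure :=
    K.isClosed_topologicalClosure.completeSpace_coe
  ext v
  show a (cproj K v) = (K.topologicalClosure).starProjection (a v)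
  symm
  apply Submodule.eq_starProjection_of_mem_orthogonal
  · exact ha _ (cproj_apply_mem K v)
  · rw [Submodule.mem_orthogonal]
    intro u hu
    have h1 : a v - a (cproj K v) = a (v - cproj K v) := by rw [map_sub]
    rw [h1]
    have h2 : ⟪u, a (v - cproj K v)⟫_ℂ = ⟪(star a) u, v - cproj K v⟫_ℂ := by
      rw [ContinuousLinearMap.star_eq_adjoint, ContinuousLinearMap.adjoint_inner_left]
    rw [h2]
    have hvp : v - cproj K v ∈ (K.topologicalClosure)ᗮ :=
      Submodule.sub_starProjection_mem_orthogonal (K := K.topologicalClosure) v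
    exact (Submodule.mem_orthogonal _ _).1 hvp _ (ha' u hu)






theorem mem_M_iff {x : H →L[ℂ] H} : x ∈ M ↔ ∀ a ∈ M.commutant, a * x = x * a := by
  conv_lhs => rw [← VonNeumannAlgebra.commutant_commutant M]
  exact VonNeumannAlgebra.mem_commutant_iff

/-- The orbit `M' ξ` as a submodule. -/
def orbit (ξ : H) : Submodule ℂ H where
  carrier := {v : H | ∃ a ∈ M.commutant, v = a ξ}
  add_mem' := by
    rintro u v ⟨a, ha, rfl⟩ ⟨b, hb, rfl⟩
    exact ⟨a + b, add_mem ha hb, rfl⟩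
  zero_mem' := ⟨0, zero_mem _, by simp⟩
  smul_mem' := by
    rintro c v ⟨a, ha, rfl⟩
    refine ⟨c • a, ?_, rfl⟩
    exact (M.commutant.toStarSubalgebra.toSubalgebra.toSubmodule).smul_mem c ha

theorem self_mem_orbit (ξ : H) : ξ ∈ orbit M ξ := ⟨1, one_mem _, by simp⟩

theorem orbit_invariant (ξ : H) {a : H →L[ℂ] H} (ha : a ∈ M.commutant) {v : H}
    (hv : v ∈ orbit M ξ) : a v ∈ orbit M ξ := by
  obtain ⟨b, hb, rfl⟩ := hv
  exact ⟨a * b, mul_mem ha hb, rfl⟩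

-- generating vector basics
theorem gen_mem_range {p : H →L[ℂ] H} {ξ : H} (h : IsGeneratingVector M p ξ) :
    ξ ∈ Set.range p := by
  rw [← h]
  exact subset_closure ⟨1, one_mem _, by simp⟩

theorem proj_fix {p : H →L[ℂ] H} (hp : p * p = p) {v : H} (hv : v ∈ Set.range p) : p v = v := by
  obtain ⟨w, rfl⟩ := hv
  calc p (p w) = (p * p) w := rfl
  _ = p w := by rw [hp]

theorem mul_proj_eq_zero_iff {p x : H →L[ℂ] H} {ξ : H} (hgen : IsGeneratingVector M p ξ)
    (hp : p * p = p) (hx : x ∈ M) : x * p = 0 ↔ x ξ = 0 := by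
  constructor
  · intro h
    have : x (p ξ) = 0 := by
      calc x (p ξ) = (x * p) ξ := rfl
      _ = 0 := by rw [h]; rfl
    rwa [proj_fix hp (gen_mem_range M hgen)] at this
  · intro h
    ext v
    show x (p v) = 0
    have hr : p v ∈ Set.range p := ⟨v, rfl⟩
    rw [← hgen] at hr
    have hsub : {w : H | ∃ a ∈ M.commutant, w = a ξ} ⊆ {w : H | x w = 0} := by
      rintro - ⟨a, ha, rfl⟩
      show x (a ξ) = 0
      have hcomm : a * x = x * a := (mem_M_iff M).1 hx a ha
      calc x (a ξ) = (x * a) ξ := rfl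
      _ = (a * x) ξ := by rw [hcomm]
      _ = a (x ξ) := rfl
      _ = 0 := by rw [h]; simp
    have hclosed : IsClosed {w : H | x w = 0} :=
      isClosed_eq x.continuous continuous_const
    exact closure_minimal hsub hclosed hr

theorem star_eq_zero_iff (x : H →L[ℂ] H) : star x = 0 ↔ x = 0 := by
  constructor
  · intro h
    have := congrArg star h
    simpa using this
  · intro h; simp [h]





theorem proj_norm_sq (e : H →L[ℂ] H) (he : IsSelfAdjoint e) (hi : e * e = e) (ξ : H) :
    (‖e ξ‖ : ℝ)^2 = (⟪ξ, e ξ⟫_ℂ).re := by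
  have h1 : ⟪e ξ, e ξ⟫_ℂ = ⟪ξ, e (e ξ)⟫_ℂ := he.isSymmetric ξ (e ξ)
  have h2 : e (e ξ) = e ξ := by
    calc e (e ξ) = (e * e) ξ := rfl
    _ = e ξ := by rw [hi]
  rw [h2] at h1
  rw [← inner_self_eq_norm_sq (𝕜 := ℂ) (e ξ), h1]
  rfl

theorem bessel_finset (ξ : H) (P : Set (H →L[ℂ] H))
    (hproj : ∀ e ∈ P, IsSelfAdjoint e ∧ e * e = e)
    (horth : ∀ e ∈ P, ∀ f ∈ P, e ≠ f → e * f = 0)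
    (F : Finset (H →L[ℂ] H)) (hF : ↑F ⊆ P) :
    (∑ e ∈ F, ‖e ξ‖^2) ≤ ‖ξ‖^2 := by
  set s : H →L[ℂ] H := ∑ e ∈ F, e with hs
  have hssa : IsSelfAdjoint s := by
    show star s = s
    rw [hs, star_sum]
    exact Finset.sum_congr rfl fun e he => (hproj e (hF he)).1
  have hsi : s * s = s := by
    rw [hs, Finset.sum_mul_sum]
    apply Finset.sum_congr rfl
    intro e he
    rw [Finset.sum_eq_single e]
    · exact (hproj e (hF he)).2
    · intro f hf hne
      exact horth e (hF he) f (hF hf) (Ne.symm hne)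
    · intro h; exact absurd he h
  have hsum : (∑ e ∈ F, ‖e ξ‖^2) = (⟪ξ, s ξ⟫_ℂ).re := by
    have : s ξ = ∑ e ∈ F, e ξ := by
      rw [hs]; exact ContinuousLinearMap.sum_apply F _ ξ
    rw [this, inner_sum, Complex.re_sum]
    apply Finset.sum_congr rfl
    intro e he
    exact proj_norm_sq e (hproj e (hF he)).1 (hproj e (hF he)).2 ξ
  have hnorm : ‖s ξ‖ ≤ ‖ξ‖ := by
    rcases eq_or_ne (s ξ) 0 with h | h
    · rw [h]; simp
    · have h1 : ‖s ξ‖^2 = (⟪ξ, s ξ⟫_ℂ).re := proj_norm_sq s hssa hsi ξ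
      have h2 : (⟪ξ, s ξ⟫_ℂ).re ≤ ‖⟪ξ, s ξ⟫_ℂ‖ := Complex.re_le_norm _
      have h3 : ‖⟪ξ, s ξ⟫_ℂ‖ ≤ ‖ξ‖ * ‖s ξ‖ := norm_inner_le_norm ξ (s ξ)
      have h4 : ‖s ξ‖^2 ≤ ‖ξ‖ * ‖s ξ‖ := le_trans (le_of_eq h1) (le_trans h2 h3)
      have h5 : (0:ℝ) < ‖s ξ‖ := norm_pos_iff.2 h
      nlinarith
  calc (∑ e ∈ F, ‖e ξ‖^2) = (⟪ξ, s ξ⟫_ℂ).re := hsum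
  _ = ‖s ξ‖^2 := (proj_norm_sq s hssa hsi ξ).symm
  _ ≤ ‖ξ‖^2 := by nlinarith [norm_nonneg (s ξ), norm_nonneg ξ]

/-- Bessel-type countability -/
theorem countable_proj_ne_zero (ξ : H) (P : Set (H →L[ℂ] H))
    (hproj : ∀ e ∈ P, IsSelfAdjoint e ∧ e * e = e)
    (horth : ∀ e ∈ P, ∀ f ∈ P, e ≠ f → e * f = 0) :
    {e ∈ P | e ξ ≠ 0}.Countable := by
  have hsub : {e ∈ P | e ξ ≠ 0} ⊆ ⋃ n : ℕ, {e ∈ P | 1/(n+1 : ℝ) ≤ ‖e ξ‖^2} := by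
    rintro e ⟨heP, hne⟩
    have hpos : (0:ℝ) < ‖e ξ‖^2 := pow_pos (norm_pos_iff.2 hne) 2
    obtain ⟨n, hn⟩ := exists_nat_one_div_lt hpos
    exact Set.mem_iUnion.2 ⟨n, heP, le_of_lt hn⟩
  apply Set.Countable.mono hsub
  apply Set.countable_iUnion
  intro n
  apply Set.Finite.countable
  by_contra hinf
  rw [← Set.not_infinite, not_not] at hinf
  obtain ⟨N, hN⟩ := exists_nat_gt ((n+1 : ℝ) * ‖ξ‖^2)
  obtain ⟨F, hFsub, hFcard⟩ := hinf.exists_subset_card_eq N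
  have hFP : ↑F ⊆ P := fun e he => (hFsub he).1
  have hbound := bessel_finset ξ P hproj horth F hFP
  have hlow : (F.card : ℝ) • (1/(n+1 : ℝ)) ≤ ∑ e ∈ F, ‖e ξ‖^2 := by
    have := Finset.card_nsmul_le_sum F (fun e => ‖e ξ‖^2) (1/(n+1:ℝ))
      (fun e he => (hFsub he).2)
    simpa using this
  rw [hFcard] at hlow
  simp only [smul_eq_mul] at hlow
  have hn1 : (0:ℝ) < n + 1 := by positivity
  have h6 : (N:ℝ) / (n+1) ≤ ‖ξ‖^2 := by
    rw [div_eq_mul_one_div]; exact le_trans hlow hbound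
  have h7 : (N:ℝ) ≤ ‖ξ‖^2 * (n+1) := (div_le_iff₀ hn1).1 h6
  nlinarith



-- ### generic helpers

/-- The fixed-point submodule of an operator. -/
def fixSub (q : H →L[ℂ] H) : Submodule ℂ H where
  carrier := {v : H | q v = v}
  add_mem' := by intro u v hu hv; show q (u + v) = u + v; rw [map_add]; rw [Set.mem_setOf_eq] at hu hv; rw [hu, hv]
  zero_mem' := by show q 0 = 0; simp
  smul_mem' := by intro c v hv; show q (c • v) = c • v; rw [map_smul]; rw [Set.mem_setOf_eq] at hv; rw [hv]

theorem fixSub_closed (q : H →L[ℂ] H) : IsClosed (fixSub q : Set H) :=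
  isClosed_eq q.continuous continuous_id

theorem vanish_on_closure_span (x : H →L[ℂ] H) {s : Set H} (h : ∀ v ∈ s, x v = 0) {v : H}
    (hv : v ∈ (Submodule.span ℂ s).topologicalClosure) : x v = 0 := by
  set ker : Submodule ℂ H :=
    { carrier := {w : H | x w = 0}
      add_mem' := by intro u w hu hw; show x (u + w) = 0; rw [map_add]
                     rw [Set.mem_setOf_eq] at hu hw; rw [hu, hw]; simp
      zero_mem' := by show x 0 = 0; simp
      smul_mem' := by intro c w hw; show x (c • w) = 0; rw [map_smul]
                      rw [Set.mem_setOf_eq] at hw; rw [hw]; simp } with hker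
  have hsp : Submodule.span ℂ s ≤ ker := Submodule.span_le.2 h
  have hcl : IsClosed (ker : Set H) := isClosed_eq x.continuous continuous_const
  exact Submodule.topologicalClosure_minimal _ hsp hcl hv

theorem mapsto_closure_span (a : H →L[ℂ] H) {s : Set H}
    (h : ∀ v ∈ s, a v ∈ Submodule.span ℂ s) {v : H}
    (hv : v ∈ (Submodule.span ℂ s).topologicalClosure) :
    a v ∈ (Submodule.span ℂ s).topologicalClosure := by
  have hmap : ∀ w ∈ Submodule.span ℂ s, a w ∈ Submodule.span ℂ s := by
    intro w hw
    have : Submodule.span ℂ s ≤ Submodule.comap (a : H →ₗ[ℂ] H) (Submodule.span ℂ s) :=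
      Submodule.span_le.2 h
    exact this hw
  have hv' : v ∈ closure (Submodule.span ℂ s : Set H) := hv
  have := map_mem_closure a.continuous hv' (fun w hw => hmap w hw)
  exact this

theorem cproj_mem_of_invariant (K : Submodule ℂ H)
    (hinv : ∀ a, a ∈ M.commutant → ∀ v ∈ K.topologicalClosure, a v ∈ K.topologicalClosure) :
    cproj K ∈ M := by
  rw [mem_M_iff]
  intro a ha
  exact cproj_comm K a (hinv a ha) (hinv (star a) (star_mem ha))

theorem cproj_sub_mem_orthogonal (K : Submodule ℂ H) (v : H) :
    v - cproj K v ∈ (K.topologicalClosure)ᗮ := by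
  haveI : CompleteSpace K.topologicalClosure :=
    K.isClosed_topologicalClosure.completeSpace_coe
  exact Submodule.sub_starProjection_mem_orthogonal (K := K.topologicalClosure) v

theorem hasSum_mem_closure {ι : Type*} {f : ι → H} {a : H} (h : HasSum f a)
    (K : Submodule ℂ H) (hf : ∀ i, f i ∈ K) : a ∈ K.topologicalClosure := by
  have hps : ∀ F : Finset ι, (∑ i ∈ F, f i) ∈ (K : Set H) :=
    fun F => K.sum_mem (fun i _ => hf i)
  have : a ∈ closure (K : Set H) :=
    mem_closure_of_tendsto h (Filter.Eventually.of_forall hps)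
  exact this


-- ### the family (p l)

section Family

variable {Λ : Type*} (p : Λ → (H →L[ℂ] H))

theorem support_countable (hsum : ∀ η : H, HasSum (fun l => p l η) η) (w : H) :
    {l : Λ | p l w ≠ 0}.Countable := by
  have : Summable (fun l => p l w) := ⟨w, hsum w⟩
  exact this.countable_support

/-- span of the ranges of the `p l`, `l ∈ S`. -/
def Lspan (S : Set Λ) : Submodule ℂ H := Submodule.span ℂ (⋃ l ∈ S, Set.range (p l))

theorem Lspan_invariant (hp : ∀ l, p l ∈ M) (S : Set Λ) {a : H →L[ℂ] H}
    (ha : a ∈ M.commutant) {v : H} (hv : v ∈ (Lspan p S).topologicalClosure) :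
    a v ∈ (Lspan p S).topologicalClosure := by
  apply mapsto_closure_span
  · rintro w hw
    rw [Set.mem_iUnion₂] at hw
    obtain ⟨l, hl, u, rfl⟩ := hw
    apply Submodule.subset_span
    apply Set.mem_biUnion hl
    refine ⟨a u, ?_⟩
    have hcomm : a * p l = p l * a := (mem_M_iff M).1 (hp l) a ha
    calc p l (a u) = (p l * a) u := rfl
    _ = (a * p l) u := by rw [hcomm]
    _ = a (p l u) := rfl
  · exact hv

theorem qS_mem (hp : ∀ l, p l ∈ M) (S : Set Λ) : cproj (Lspan p S) ∈ M :=
  cproj_mem_of_invariant M _ (fun a ha v hv => Lspan_invariant M p hp S ha hv)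

theorem qS_isProjection (hp : ∀ l, p l ∈ M) (S : Set Λ) :
    IsProjectionIn M (cproj (Lspan p S)) :=
  ⟨qS_mem M p hp S, cproj_isSelfAdjoint _, cproj_idem _⟩

theorem qS_mul_eq_self (S : Set Λ) (hsum : ∀ η : H, HasSum (fun l => p l η) η)
    {x : H →L[ℂ] H} (hx : ∀ l ∉ S, p l * x = 0) :
    cproj (Lspan p S) * x = x := by
  ext v
  show cproj (Lspan p S) (x v) = x v
  apply cproj_eq_self
  apply hasSum_mem_closure (hsum (x v))
  intro l
  by_cases hl : l ∈ S
  · exact Submodule.subset_span (Set.mem_biUnion hl ⟨x v, rfl⟩)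
  · have : p l (x v) = (p l * x) v := rfl
    rw [this, hx l hl]
    exact (Lspan p S).zero_mem

open scoped Classical in
/-- a choice of generating vector -/
def gvec (e : H →L[ℂ] H) : H :=
  if h : ∃ ξ : H, IsGeneratingVector M e ξ then h.choose else 0

theorem gvec_spec {e : H →L[ℂ] H} (h : ∃ ξ : H, IsGeneratingVector M e ξ) :
    IsGeneratingVector M e (gvec M e) := by
  rw [gvec, dif_pos h]
  exact h.choose_spec

/-- KEY2: σ-finiteness of the projection onto the span of countably many
of the cyclic projections. -/
theorem qS_sigmaFinite (hcyc : ∀ l, IsCyclicProjection M (p l))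
    (S : Set Λ) (hS : S.Countable) :
    IsSigmaFiniteProjection M (cproj (Lspan p S)) := by
  have hp : ∀ l, p l ∈ M := fun l => (hcyc l).1.1
  refine ⟨qS_isProjection M p hp S, ?_⟩
  intro P hP horthP
  set q := cproj (Lspan p S) with hq
  have hcover : P ⊆ ⋃ l ∈ S, {e ∈ P | e (gvec M (p l)) ≠ 0} := by
    intro e heP
    obtain ⟨⟨heM, hesa, heid⟩, hene, heq⟩ := hP e heP
    by_contra hnot
    rw [Set.mem_iUnion₂] at hnot
    push_neg at hnot
    have hvanish : ∀ l ∈ S, e * p l = 0 := by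
      intro l hl
      have hgen := gvec_spec M (hcyc l).2
      exact (mul_proj_eq_zero_iff M hgen (hcyc l).1.2.2 heM).2 (by
        have := hnot l hl
        by_contra hc
        exact (this ⟨heP, hc⟩).elim)
    -- e vanishes on the closed span
    have heq0 : e * q = 0 := by
      ext v
      show e (q v) = 0
      have hqv : q v ∈ (Lspan p S).topologicalClosure := cproj_apply_mem _ v
      apply vanish_on_closure_span e _ hqv
      rintro w hw
      rw [Set.mem_iUnion₂] at hw
      obtain ⟨l, hl, u, rfl⟩ := hw
      calc e (p l u) = (e * p l) u := rfl
      _ = 0 := by rw [hvanish l hl]; rfl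
    have heqe : e * q = e := by
      rw [heq, hq]
      calc cproj (Lspan p S) * e * cproj (Lspan p S) * cproj (Lspan p S)
          = cproj (Lspan p S) * e * (cproj (Lspan p S) * cproj (Lspan p S)) := by
            rw [mul_assoc]
      _ = cproj (Lspan p S) * e * cproj (Lspan p S) := by rw [cproj_idem]
    exact hene (by rw [← heqe, heq0])
  apply Set.Countable.mono hcover
  apply Set.Countable.biUnion hS
  intro l hl
  exact countable_proj_ne_zero (gvec M (p l)) P
    (fun e he => ⟨(hP e he).1.2.1, (hP e he).1.2.2⟩) horthP

/-- KEY1: countability transfer. -/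
theorem key1 (hcyc : ∀ l, IsCyclicProjection M (p l))
    (hsum : ∀ η : H, HasSum (fun l => p l η) η)
    {x : H →L[ℂ] H} (hx : x ∈ M) (hA : {l : Λ | p l * x ≠ 0}.Countable) :
    {l : Λ | x * p l ≠ 0}.Countable := by
  have hp : ∀ l, p l ∈ M := fun l => (hcyc l).1.1
  have hgen : ∀ l, IsGeneratingVector M (p l) (gvec M (p l)) :=
    fun l => gvec_spec M (hcyc l).2
  have hcover : {m : Λ | x * p m ≠ 0} ⊆
      ⋃ l ∈ {l : Λ | p l * x ≠ 0}, {m : Λ | p m ((star x) (gvec M (p l))) ≠ 0} := by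
    intro m hm
    have hxξ : x (gvec M (p m)) ≠ 0 := by
      intro h0
      exact hm ((mul_proj_eq_zero_iff M (hgen m) (hcyc m).1.2.2 hx).2 h0)
    -- some l with p l (x ξ_m) ≠ 0
    have : ∃ l, p l (x (gvec M (p m))) ≠ 0 := by
      by_contra hno
      push_neg at hno
      have h00 : HasSum (fun l => p l (x (gvec M (p m)))) 0 := by
        convert hasSum_zero with l
        exact hno l
      exact hxξ ((hsum (x (gvec M (p m)))).unique h00)
    obtain ⟨l, hl⟩ := this
    have hlA : p l * x ≠ 0 := by
      intro h0
      apply hl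
      calc p l (x (gvec M (p m))) = (p l * x) (gvec M (p m)) := rfl
      _ = 0 := by rw [h0]; rfl
    apply Set.mem_biUnion (show l ∈ {l : Λ | p l * x ≠ 0} from hlA)
    -- p m ((star x) ξ_l) ≠ 0
    show p m ((star x) (gvec M (p l))) ≠ 0
    -- chain of iffs
    have h1 : (p l * x) * p m ≠ 0 := by
      intro h0
      exact hl ((mul_proj_eq_zero_iff M (hgen m) (hcyc m).1.2.2
        (mul_mem (hp l) hx)).1 h0)
    have h2 : (p m * (star x)) * p l ≠ 0 := by
      intro h0
      apply h1
      have : star ((p m * (star x)) * p l) = (p l * x) * p m := by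
        rw [star_mul, star_mul, star_star, (hcyc l).1.2.1.star_eq, (hcyc m).1.2.1.star_eq,
          mul_assoc]
      rw [← this, h0, star_zero]
    intro h0
    apply h2
    apply (mul_proj_eq_zero_iff M (hgen l) (hcyc l).1.2.2
      (mul_mem (hp m) (star_mem hx))).2
    calc (p m * (star x)) (gvec M (p l)) = p m ((star x) (gvec M (p l))) := rfl
    _ = 0 := h0
  apply Set.Countable.mono hcover
  exact Set.Countable.biUnion hA (fun l _ => support_countable p hsum ((star x) (gvec M (p l))))


/-- KEY3: if `q` is a σ-finite projection and `q x = x` then `p l x = 0` for all but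
countably many `l`. -/
theorem key3 (hcyc : ∀ l, IsCyclicProjection M (p l))
    (hsum : ∀ η : H, HasSum (fun l => p l η) η)
    {q x : H →L[ℂ] H} (hq : IsSigmaFiniteProjection M q) (hx : x ∈ M)
    (hqx : q * x = x) : {l : Λ | p l * x ≠ 0}.Countable := by
  obtain ⟨⟨hqM, hqsa, hqid⟩, hqcount⟩ := hq
  have hp : ∀ l, p l ∈ M := fun l => (hcyc l).1.1
  -- the collection of orthogonal families of nonzero cyclic subprojections of q
  set C : Set (Set (H →L[ℂ] H)) :=
    {F | (∀ e ∈ F, (IsProjectionIn M e ∧ e ≠ 0 ∧ e = q * e * q) ∧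
            ∃ ξ : H, IsGeneratingVector M e ξ) ∧
         ∀ e ∈ F, ∀ f ∈ F, e ≠ f → e * f = 0} with hC
  obtain ⟨F, hFC, hFmax⟩ : ∃ F, Maximal (· ∈ C) F := by
    apply zorn_subset
    intro c hc hchain
    refine ⟨⋃₀ c, ⟨?_, ?_⟩, fun s hs => Set.subset_sUnion_of_mem hs⟩
    · rintro e ⟨F, hFc, heF⟩
      exact (hc hFc).1 e heF
    · rintro e ⟨F1, hF1, he1⟩ f ⟨F2, hF2, hf2⟩ hne
      rcases eq_or_ne F1 F2 with rfl | hF12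
      · exact (hc hF1).2 e he1 f hf2 hne
      · rcases hchain hF1 hF2 hF12 with hsub | hsub
        · exact (hc hF2).2 e (hsub he1) f hf2 hne
        · exact (hc hF1).2 e he1 f (hsub hf2) hne
  have hFmem : (∀ e ∈ F, (IsProjectionIn M e ∧ e ≠ 0 ∧ e = q * e * q) ∧
      ∃ ξ : H, IsGeneratingVector M e ξ) ∧ ∀ e ∈ F, ∀ f ∈ F, e ≠ f → e * f = 0 := hFC
  have hFcount : F.Countable :=
    hqcount F (fun e he => ⟨(hFmem.1 e he).1.1, (hFmem.1 e he).1.2.1,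
      (hFmem.1 e he).1.2.2⟩) hFmem.2
  set Lf : Submodule ℂ H := Submodule.span ℂ (⋃ e ∈ F, Set.range e) with hLf
  -- q * e = e and e * q = e for e ∈ F
  have hqe : ∀ e ∈ F, q * e = e := by
    intro e he
    have heq := (hFmem.1 e he).1.2.2
    calc q * e = q * (q * e * q) := by rw [← heq]
    _ = (q * q) * e * q := by rw [← mul_assoc, ← mul_assoc]
    _ = q * e * q := by rw [hqid]
    _ = e := heq.symm
  -- closure of Lf is fixed by q
  have hfixL : ∀ v ∈ Lf.topologicalClosure, q v = v := by
    have hle : Lf ≤ fixSub q := by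
      rw [hLf]
      apply Submodule.span_le.2
      rintro w hw
      rw [Set.mem_iUnion₂] at hw
      obtain ⟨e, he, u, rfl⟩ := hw
      show q (e u) = e u
      calc q (e u) = (q * e) u := rfl
      _ = e u := by rw [hqe e he]
    intro v hv
    exact Submodule.topologicalClosure_minimal _ hle (fixSub_closed q) hv
  -- closure of Lf is invariant under the commutant
  have hLinv : ∀ a ∈ M.commutant, ∀ v ∈ Lf.topologicalClosure,
      a v ∈ Lf.topologicalClosure := by
    intro a ha v hv
    apply mapsto_closure_span
    · rintro w hw
      rw [Set.mem_iUnion₂] at hw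
      obtain ⟨e, he, u, rfl⟩ := hw
      apply Submodule.subset_span
      apply Set.mem_biUnion he
      refine ⟨a u, ?_⟩
      have hcomm : a * e = e * a := (mem_M_iff M).1 (hFmem.1 e he).1.1.1 a ha
      calc e (a u) = (e * a) u := rfl
      _ = (a * e) u := by rw [hcomm]
      _ = a (e u) := rfl
    · exact hv
  -- MAIN CLAIM: the range of q is contained in the closure of Lf
  have hqL : ∀ w : H, q w ∈ Lf.topologicalClosure := by
    by_contra hno
    push_neg at hno
    obtain ⟨w, hw⟩ := hno
    set u : H := q w - cproj Lf (q w) with hu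
    have hu0 : u ≠ 0 := by
      intro h
      apply hw
      have : q w = cproj Lf (q w) := by
        have := sub_eq_zero.1 h
        exact this
      rw [this]
      exact cproj_apply_mem Lf (q w)
    have huq : q u = u := by
      rw [hu, map_sub]
      have h1 : q (q w) = q w := by
        calc q (q w) = (q * q) w := rfl
        _ = q w := by rw [hqid]
      have h2 : q (cproj Lf (q w)) = cproj Lf (q w) :=
        hfixL _ (cproj_apply_mem Lf (q w))
      rw [h1, h2]
    have huperp : u ∈ (Lf.topologicalClosure)ᗮ := cproj_sub_mem_orthogonal Lf (q w)
    set e₀ : H →L[ℂ] H := cproj (orbit M u) with he₀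
    have he₀M : e₀ ∈ M := by
      apply cproj_mem_of_invariant
      intro a ha v hv
      exact map_mem_closure a.continuous hv (fun z hz => orbit_invariant M u ha hz)
    have he₀sa : IsSelfAdjoint e₀ := cproj_isSelfAdjoint _
    have he₀id : e₀ * e₀ = e₀ := cproj_idem _
    have he₀u : e₀ u = u :=
      cproj_eq_self _ (Submodule.le_topologicalClosure _ (self_mem_orbit M u))
    have he₀ne : e₀ ≠ 0 := by
      intro h
      apply hu0
      rw [← he₀u, h]
      rfl
    have hgen₀ : IsGeneratingVector M e₀ u := by
      show closure {v : H | ∃ a ∈ M.commutant, v = a u} = Set.range e₀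
      rw [he₀, range_cproj, Submodule.topologicalClosure_coe]
      rfl
    have hqe₀ : q * e₀ = e₀ := by
      ext v
      show q (e₀ v) = e₀ v
      have : (orbit M u).topologicalClosure ≤ fixSub q := by
        apply Submodule.topologicalClosure_minimal _ _ (fixSub_closed q)
        rintro - ⟨a, ha, rfl⟩
        show q (a u) = a u
        have hcomm : a * q = q * a := (mem_M_iff M).1 hqM a ha
        calc q (a u) = (q * a) u := rfl
        _ = (a * q) u := by rw [hcomm]
        _ = a (q u) := rfl
        _ = a u := by rw [huq]
      exact this (cproj_apply_mem _ v)
    have he₀q : e₀ * q = e₀ := by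
      have := congrArg star hqe₀
      rwa [star_mul, hqsa.star_eq, he₀sa.star_eq] at this
    have horth₀ : ∀ e ∈ F, e₀ * e = 0 := by
      intro e he
      ext v
      show e₀ (e v) = 0
      have hev : e v ∈ Lf.topologicalClosure := by
        apply Submodule.le_topologicalClosure
        exact Submodule.subset_span (Set.mem_biUnion he ⟨v, rfl⟩)
      rw [he₀]
      rw [cproj_eq_zero_iff]
      rintro - ⟨a, ha, rfl⟩
      -- ⟪a u, e v⟫ = 0
      have h1 : (⟪e v, a u⟫_ℂ) = ⟪(ContinuousLinearMap.adjoint a) (e v), u⟫_ℂ :=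
        (ContinuousLinearMap.adjoint_inner_left a u (e v)).symm
      have h2 : (ContinuousLinearMap.adjoint a) (e v) ∈ Lf.topologicalClosure := by
        have hsa : (ContinuousLinearMap.adjoint a) = star a :=
          (ContinuousLinearMap.star_eq_adjoint a).symm
        rw [hsa]
        exact hLinv (star a) (star_mem ha) (e v) hev
      have h3 : ⟪(ContinuousLinearMap.adjoint a) (e v), u⟫_ℂ = 0 :=
        (Submodule.mem_orthogonal _ u).1 huperp _ h2
      have h4 : (⟪e v, a u⟫_ℂ) = 0 := by rw [h1, h3]
      calc (⟪a u, e v⟫_ℂ) = starRingEnd ℂ ⟪e v, a u⟫_ℂ := (inner_conj_symm _ _).symm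
      _ = 0 := by rw [h4]; simp
    have horthF : ∀ e ∈ F, e * e₀ = 0 := by
      intro e he
      have := congrArg star (horth₀ e he)
      rwa [star_mul, he₀sa.star_eq, (hFmem.1 e he).1.1.2.1.star_eq, star_zero] at this
    have he₀F : e₀ ∉ F := by
      intro h
      have := horth₀ e₀ h
      rw [he₀id] at this
      exact he₀ne this
    -- contradiction with maximality
    have hins : insert e₀ F ∈ C := by
      constructor
      · rintro e (rfl | he)
        · exact ⟨⟨⟨he₀M, he₀sa, he₀id⟩, he₀ne, by rw [hqe₀, he₀q]⟩, ⟨u, hgen₀⟩⟩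
        · exact hFmem.1 e he
      · rintro e (rfl | he) f (rfl | hf) hne
        · exact absurd rfl hne
        · exact horth₀ f hf
        · exact horthF e he
        · exact hFmem.2 e he f hf hne
    have hsub := hFmax hins (Set.subset_insert e₀ F)
    exact he₀F (hsub (Set.mem_insert e₀ F))
  -- conclusion
  have hcover : {l : Λ | p l * x ≠ 0} ⊆ ⋃ e ∈ F, {l : Λ | p l (gvec M e) ≠ 0} := by
    intro l hl
    by_contra hno
    rw [Set.mem_iUnion₂] at hno
    push_neg at hno
    have hvanish : ∀ e ∈ F, p l * e = 0 := by
      intro e he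
      apply (mul_proj_eq_zero_iff M (gvec_spec M (hFmem.1 e he).2)
        (hFmem.1 e he).1.1.2.2 (hp l)).2
      exact not_not.1 (hno e he)
    apply hl
    ext v
    show p l (x v) = 0
    have hxv : x v = q (x v) := by
      conv_lhs => rw [← hqx]
      rfl
    rw [hxv]
    apply vanish_on_closure_span (p l) _ (hqL (x v))
    rintro z hz
    rw [Set.mem_iUnion₂] at hz
    obtain ⟨e, he, t, rfl⟩ := hz
    calc p l (e t) = (p l * e) t := rfl
    _ = 0 := by rw [hvanish e he]; rfl
  apply Set.Countable.mono hcover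
  exact Set.Countable.biUnion hFcount (fun e _ => support_countable p hsum (gvec M e))

end Family


/-- **Proposition.** If `(p_λ)` is a family of mutually orthogonal cyclic projections in
`M` with sum `1`, then the four sets
`{x ∈ M : {λ : p_λ x ≠ 0} countable}`, `{x ∈ M : {λ : x p_λ ≠ 0} countable}`,
`{x ∈ M : ∃ σ-finite projection q, q x = x}` and
`{x ∈ M : ∃ σ-finite projection q, q x q = x}` coincide, and the common set `D` is a
self-adjoint linear subspace and a two-sided ideal of `M`. -/
theorem sigmaSubspace_description
    {Λ : Type*} (p : Λ → (H →L[ℂ] H))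
    (hcyc : ∀ l, IsCyclicProjection M (p l))
    (horth : ∀ l m, l ≠ m → p l * p m = 0)
    (hsum : ∀ η : H, HasSum (fun l => p l η) η) :
    ({x : H →L[ℂ] H | x ∈ M ∧ {l : Λ | p l * x ≠ 0}.Countable}
        = {x : H →L[ℂ] H | x ∈ M ∧ {l : Λ | x * p l ≠ 0}.Countable}) ∧
    ({x : H →L[ℂ] H | x ∈ M ∧ {l : Λ | p l * x ≠ 0}.Countable}
        = {x : H →L[ℂ] H | x ∈ M ∧ ∃ q, IsSigmaFiniteProjection M q ∧ q * x = x}) ∧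
    ({x : H →L[ℂ] H | x ∈ M ∧ {l : Λ | p l * x ≠ 0}.Countable}
        = {x : H →L[ℂ] H | x ∈ M ∧ ∃ q, IsSigmaFiniteProjection M q ∧ q * x * q = x}) ∧
    (∀ x ∈ {x : H →L[ℂ] H | x ∈ M ∧ {l : Λ | p l * x ≠ 0}.Countable},
        star x ∈ {x : H →L[ℂ] H | x ∈ M ∧ {l : Λ | p l * x ≠ 0}.Countable}) ∧
    ((0 : H →L[ℂ] H) ∈ {x : H →L[ℂ] H | x ∈ M ∧ {l : Λ | p l * x ≠ 0}.Countable}) ∧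
    (∀ x ∈ {x : H →L[ℂ] H | x ∈ M ∧ {l : Λ | p l * x ≠ 0}.Countable},
      ∀ y ∈ {x : H →L[ℂ] H | x ∈ M ∧ {l : Λ | p l * x ≠ 0}.Countable},
        x + y ∈ {x : H →L[ℂ] H | x ∈ M ∧ {l : Λ | p l * x ≠ 0}.Countable}) ∧
    (∀ (c : ℂ), ∀ x ∈ {x : H →L[ℂ] H | x ∈ M ∧ {l : Λ | p l * x ≠ 0}.Countable},
        c • x ∈ {x : H →L[ℂ] H | x ∈ M ∧ {l : Λ | p l * x ≠ 0}.Countable}) ∧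
    (∀ x ∈ {x : H →L[ℂ] H | x ∈ M ∧ {l : Λ | p l * x ≠ 0}.Countable}, ∀ a ∈ M,
        a * x ∈ {x : H →L[ℂ] H | x ∈ M ∧ {l : Λ | p l * x ≠ 0}.Countable} ∧
        x * a ∈ {x : H →L[ℂ] H | x ∈ M ∧ {l : Λ | p l * x ≠ 0}.Countable}) := by
  classical
  have hp : ∀ l, p l ∈ M := fun l => (hcyc l).1.1
  have hpsa : ∀ l, IsSelfAdjoint (p l) := fun l => (hcyc l).1.2.1
  -- star transfer for the index sets
  have hstar1 : ∀ x : H →L[ℂ] H, {l : Λ | x * p l ≠ 0} = {l : Λ | p l * star x ≠ 0} := by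
    intro x
    ext l
    simp only [Set.mem_setOf_eq]
    have hst : p l * star x = star (x * p l) := by
      rw [star_mul, (hpsa l).star_eq]
    rw [hst]
    exact (not_congr (star_eq_zero_iff (x * p l))).symm
  have hstar2 : ∀ x : H →L[ℂ] H, {l : Λ | star x * p l ≠ 0} = {l : Λ | p l * x ≠ 0} := by
    intro x
    have := hstar1 (star x)
    rwa [star_star] at this
  -- first equality
  have hE12 : {x : H →L[ℂ] H | x ∈ M ∧ {l : Λ | p l * x ≠ 0}.Countable}
      = {x : H →L[ℂ] H | x ∈ M ∧ {l : Λ | x * p l ≠ 0}.Countable} := by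
    ext x
    simp only [Set.mem_setOf_eq]
    constructor
    · rintro ⟨hxM, hA⟩
      exact ⟨hxM, key1 M p hcyc hsum hxM hA⟩
    · rintro ⟨hxM, hB⟩
      refine ⟨hxM, ?_⟩
      have hB' : {l : Λ | p l * star x ≠ 0}.Countable := by rwa [hstar1 x] at hB
      have := key1 M p hcyc hsum (star_mem hxM) hB'
      rwa [hstar2 x] at this
  -- construction of the sigma-finite projection for x in D
  have hD_q : ∀ x : H →L[ℂ] H, x ∈ M → {l : Λ | p l * x ≠ 0}.Countable →
      ∃ q, IsSigmaFiniteProjection M q ∧ q * x = x ∧ x * q = x := by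
    intro x hxM hA
    have hB : {l : Λ | x * p l ≠ 0}.Countable := key1 M p hcyc hsum hxM hA
    set S : Set Λ := {l : Λ | p l * x ≠ 0} ∪ {l : Λ | x * p l ≠ 0} with hS
    have hq1 : cproj (Lspan p S) * x = x := by
      apply qS_mul_eq_self p S hsum
      intro l hl
      rw [hS, Set.mem_union] at hl
      push_neg at hl
      exact not_not.1 hl.1
    have hq2 : x * cproj (Lspan p S) = x := by
      have h1 : cproj (Lspan p S) * star x = star x := by
        apply qS_mul_eq_self p S hsum
        intro l hl
        rw [hS, Set.mem_union] at hl
        push_neg at hl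
        have hxl : x * p l = 0 := not_not.1 hl.2
        calc p l * star x = star (x * p l) := by rw [star_mul, (hpsa l).star_eq]
        _ = 0 := by rw [hxl, star_zero]
      have := congrArg star h1
      rwa [star_mul, star_star, (cproj_isSelfAdjoint (Lspan p S)).star_eq] at this
    exact ⟨cproj (Lspan p S), qS_sigmaFinite M p hcyc S (hA.union hB), hq1, hq2⟩
  have hE13 : {x : H →L[ℂ] H | x ∈ M ∧ {l : Λ | p l * x ≠ 0}.Countable}
      = {x : H →L[ℂ] H | x ∈ M ∧ ∃ q, IsSigmaFiniteProjection M q ∧ q * x = x} := by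
    ext x
    simp only [Set.mem_setOf_eq]
    constructor
    · rintro ⟨hxM, hA⟩
      obtain ⟨q, hq, hq1, -⟩ := hD_q x hxM hA
      exact ⟨hxM, q, hq, hq1⟩
    · rintro ⟨hxM, q, hq, hq1⟩
      exact ⟨hxM, key3 M p hcyc hsum hq hxM hq1⟩
  have hE14 : {x : H →L[ℂ] H | x ∈ M ∧ {l : Λ | p l * x ≠ 0}.Countable}
      = {x : H →L[ℂ] H | x ∈ M ∧ ∃ q, IsSigmaFiniteProjection M q ∧ q * x * q = x} := by
    ext x
    simp only [Set.mem_setOf_eq]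
    constructor
    · rintro ⟨hxM, hA⟩
      obtain ⟨q, hq, hq1, hq2⟩ := hD_q x hxM hA
      refine ⟨hxM, q, hq, ?_⟩
      rw [hq1, hq2]
    · rintro ⟨hxM, q, hq, hq1⟩
      have hqid : q * q = q := hq.1.2.2
      have hq2 : q * x = x := by
        conv_lhs => rw [← hq1]
        calc q * (q * x * q) = (q * q) * x * q := by rw [← mul_assoc, ← mul_assoc]
        _ = q * x * q := by rw [hqid]
        _ = x := hq1
      exact ⟨hxM, key3 M p hcyc hsum hq hxM hq2⟩
  refine ⟨hE12, hE13, hE14, ?_, ?_, ?_, ?_, ?_⟩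
  · -- star closure
    rintro x ⟨hxM, hA⟩
    refine ⟨star_mem hxM, ?_⟩
    have hx2 : x ∈ {x : H →L[ℂ] H | x ∈ M ∧ {l : Λ | x * p l ≠ 0}.Countable} := by
      rw [← hE12]; exact ⟨hxM, hA⟩
    have hB : {l : Λ | x * p l ≠ 0}.Countable := hx2.2
    rwa [hstar1 x] at hB
  · -- zero
    refine ⟨zero_mem M.toStarSubalgebra, ?_⟩
    apply Set.Countable.mono _ Set.countable_empty
    intro l hl
    exact (hl (mul_zero (p l))).elim
  · -- addition
    rintro x ⟨hxM, hA⟩ y ⟨hyM, hB⟩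
    refine ⟨add_mem hxM hyM, ?_⟩
    apply Set.Countable.mono _ (hA.union hB)
    intro l hl
    rw [Set.mem_union]
    by_contra hc
    push_neg at hc
    apply hl
    rw [mul_add, not_not.1 hc.1, not_not.1 hc.2, add_zero]
  · -- scalar multiplication
    rintro c x ⟨hxM, hA⟩
    refine ⟨(M.toStarSubalgebra.toSubalgebra.toSubmodule).smul_mem c hxM, ?_⟩
    apply Set.Countable.mono _ hA
    intro l hl
    by_contra hc
    apply hl
    rw [mul_smul_comm, not_not.1 hc, smul_zero]
  · -- two-sided ideal
    rintro x ⟨hxM, hA⟩ a haM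
    constructor
    · -- a * x
      have hx2 : x ∈ {x : H →L[ℂ] H | x ∈ M ∧ {l : Λ | x * p l ≠ 0}.Countable} := by
        rw [← hE12]; exact ⟨hxM, hA⟩
      have hax : a * x ∈ {x : H →L[ℂ] H | x ∈ M ∧ {l : Λ | x * p l ≠ 0}.Countable} := by
        refine ⟨mul_mem haM hxM, ?_⟩
        apply Set.Countable.mono _ hx2.2
        intro l hl
        by_contra hc
        apply hl
        rw [mul_assoc, not_not.1 hc, mul_zero]
      rw [← hE12] at hax
      exact hax
    · -- x * a
      refine ⟨mul_mem hxM haM, ?_⟩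
      apply Set.Countable.mono _ hA
      intro l hl
      by_contra hc
      apply hl
      rw [← mul_assoc, not_not.1 hc, zero_mul]


end Paper
end
end
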